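/- arXiv:1205.1120 — 6 statements merged into one kernel-verified Lean document; each statement's English description precedes it below -/
import Mathlib

section
/- Let G be a finite group, R a commutative ring, F a family of subgroups of G closed under conjugation and under taking subgroups, and let X be a G-set such that the fixed-point set X^H is nonempty if and only if H ∈ F. Then a short exact sequence 0 → A → B → C → 0 of RG-modules is F-split if and only if the sequence 0 → A ⊗_R RX → B ⊗_R RX → C ⊗_R RX → 0 (with diagonal G-action on the tensor products, RX the permutation module on X) splits as a sequence of RG-modules. -/
open CategoryTheory MonoidalCategory

/-- A surjection `π : B → C` of `RG`-modules (`R`-linear `G`-representations) is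
`H`-split if, after restriction to `H`, the corresponding short exact sequence splits,
i.e. `π` admits an `RH`-linear section: an `R`-linear section commuting with the
action of every `h ∈ H`. -/
def IsHSplitSurj (R : Type) [CommRing R] (G : Type) [Group G] (H : Subgroup G)
    {B C : Rep R G} (π : B ⟶ C) : Prop :=
  ∃ s : C.V →ₗ[R] B.V, (∀ c, π.hom (s c) = c) ∧
    ∀ h ∈ H, ∀ c, s (C.ρ h c) = B.ρ h (s c)

section Aux

variable {R G X : Type} [CommRing R] [Group G] [MulAction G X] [DecidableEq X]
variable {M N : Type} [AddCommGroup M] [Module R M] [AddCommGroup N] [Module R N]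

/-- Given a family of maps `σ x : M → N` indexed by `x : X`, the induced map
`M ⊗ R[X] → N ⊗ R[X]` sending `m ⊗ x ↦ σ x m ⊗ x`. -/
noncomputable def tEquiv (M : Type) [AddCommGroup M] [Module R M] :
    TensorProduct R M (MonoidAlgebra R X) ≃ₗ[R] (X →₀ M) :=
  (LinearEquiv.lTensor M (MonoidAlgebra.coeffLinearEquiv R)).trans
    (TensorProduct.finsuppScalarRight R R M X)

lemma tEquiv_tmul (m : M) (f : MonoidAlgebra R X) (y : X) :
    tEquiv (R := R) (X := X) M (m ⊗ₜ[R] f) y = f.coeff y • m := by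
  simp [tEquiv]

lemma tEquiv_tmul_single (m : M) (x : X) (r : R) :
    tEquiv (R := R) (X := X) M (m ⊗ₜ[R] MonoidAlgebra.single x r) = Finsupp.single x (r • m) := by
  ext y
  rw [tEquiv_tmul, MonoidAlgebra.coeff_single, Finsupp.single_apply, Finsupp.single_apply]
  split_ifs <;> simp

noncomputable def tensorSec (σ : X → (M →ₗ[R] N)) :
    TensorProduct R M (MonoidAlgebra R X) →ₗ[R] TensorProduct R N (MonoidAlgebra R X) :=
  (tEquiv N).symm.toLinearMap ∘ₗ
    (Finsupp.lsum R fun x => (Finsupp.lsingle x).comp (σ x)) ∘ₗ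
    (tEquiv M).toLinearMap

lemma tensorSec_tmul_single (σ : X → (M →ₗ[R] N)) (c : M) (x : X) (r : R) :
    tensorSec σ (c ⊗ₜ[R] MonoidAlgebra.single x r) = σ x c ⊗ₜ[R] MonoidAlgebra.single x r := by
  simp only [tensorSec, LinearMap.comp_apply, LinearEquiv.coe_coe, tEquiv_tmul_single,
    Finsupp.lsum_single, LinearMap.coe_comp, Function.comp_apply, Finsupp.lsingle_apply,
    map_smul]
  rw [← map_smul, LinearEquiv.symm_apply_eq, tEquiv_tmul_single, Finsupp.smul_single]

lemma tensorSec_section (σ : X → (M →ₗ[R] N)) (φ : N →ₗ[R] M)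
    (h : ∀ x c, φ (σ x c) = c) (t : TensorProduct R M (MonoidAlgebra R X)) :
    TensorProduct.map φ LinearMap.id (tensorSec σ t) = t := by
  induction t using TensorProduct.induction_on with
  | zero => simp
  | tmul c f =>
    induction f using MonoidAlgebra.induction_linear with
    | zero => simp
    | add f g hf hg => simp only [TensorProduct.tmul_add, map_add, hf, hg]
    | single x r =>
      rw [tensorSec_tmul_single, TensorProduct.map_tmul, h, LinearMap.id_apply]
  | add u v hu hv => simp only [map_add, hu, hv]

lemma tensorSec_equivariant (σ : X → (M →ₗ[R] N)) (g : G) (e : M →ₗ[R] M) (e' : N →ₗ[R] N)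
    (h : ∀ x c, σ (g • x) (e c) = e' (σ x c)) (t : TensorProduct R M (MonoidAlgebra R X)) :
    tensorSec σ (TensorProduct.map e (Representation.ofMulAction R G X g) t)
      = TensorProduct.map e' (Representation.ofMulAction R G X g) (tensorSec σ t) := by
  induction t using TensorProduct.induction_on with
  | zero => simp
  | tmul c f =>
    induction f using MonoidAlgebra.induction_linear with
    | zero => simp
    | add f f' hf hf' => simp only [TensorProduct.tmul_add, map_add, hf, hf']
    | single x r =>
      rw [TensorProduct.map_tmul, Representation.ofMulAction_single,
        tensorSec_tmul_single, tensorSec_tmul_single, TensorProduct.map_tmul,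
        Representation.ofMulAction_single]
      exact congrArg (· ⊗ₜ[R] MonoidAlgebra.single (g • x) r) (h x c)
  | add u v hu hv => simp only [map_add, hu, hv]

/-- Projection `M ⊗ R[X] → M` reading off the coefficient of `x : X`. -/
noncomputable def projAt (x : X) : TensorProduct R M (MonoidAlgebra R X) →ₗ[R] M :=
  (Finsupp.lapply x) ∘ₗ (tEquiv M).toLinearMap

lemma projAt_tmul (x : X) (m : M) (f : MonoidAlgebra R X) :
    projAt x (m ⊗ₜ[R] f) = f.coeff x • m := by
  simp only [projAt, LinearMap.comp_apply, LinearEquiv.coe_coe, Finsupp.lapply_apply]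
  rw [tEquiv_tmul]

lemma projAt_natural (x : X) (φ : M →ₗ[R] N) (t : TensorProduct R M (MonoidAlgebra R X)) :
    projAt x (TensorProduct.map φ LinearMap.id t) = φ (projAt x t) := by
  induction t using TensorProduct.induction_on with
  | zero => simp
  | tmul m f => simp [projAt_tmul]
  | add u v hu hv => simp only [map_add, hu, hv]

lemma projAt_equivariant (x : X) (g : G) (hgx : g • x = x) (e : M →ₗ[R] M)
    (t : TensorProduct R M (MonoidAlgebra R X)) :
    projAt x (TensorProduct.map e (Representation.ofMulAction R G X g) t)
      = e (projAt x t) := by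
  have hx' : g⁻¹ • x = x := by conv_lhs => rw [← hgx, inv_smul_smul]
  induction t using TensorProduct.induction_on with
  | zero => simp
  | tmul m f =>
    rw [TensorProduct.map_tmul, projAt_tmul, projAt_tmul, map_smul,
      Representation.coeff_ofMulAction, hx']
  | add u v hu hv => simp only [map_add, hu, hv]

end Aux

/-- Let `G` be a finite group, `R` a commutative ring, `F` a family of
subgroups of `G` closed under conjugation and under taking subgroups, and `X` a `G`-set
such that `X^H ≠ ∅` if and only if `H ∈ F`.  Then a short exact sequence
`0 → A → B → C → 0` of `RG`-modules is `F`-split (i.e. splits after restriction to each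
`H ∈ F`) if and only if `0 → A ⊗ RX → B ⊗ RX → C ⊗ RX → 0` (diagonal `G`-action, `RX`
the permutation module on `X`) splits as a sequence of `RG`-modules. -/
theorem fSplit_iff_tensorSplit
    (G : Type) [Group G] [Finite G] (R : Type) [CommRing R]
    (F : Set (Subgroup G))
    (hconj : ∀ H ∈ F, ∀ g : G, Subgroup.map (MulAut.conj g).toMonoidHom H ∈ F)
    (hsub : ∀ H ∈ F, ∀ K : Subgroup G, K ≤ H → K ∈ F)
    (X : Type) [MulAction G X]
    (hX : ∀ H : Subgroup G, H ∈ F ↔ ∃ x : X, ∀ h ∈ H, h • x = x)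
    (A B C : Rep R G) (i : A ⟶ B) (p : B ⟶ C)
    (hi : Function.Injective i.hom) (hp : Function.Surjective p.hom)
    (hexact : LinearMap.range i.hom.toLinearMap = LinearMap.ker p.hom.toLinearMap) :
    (∀ H ∈ F, IsHSplitSurj R G H p) ↔
      ∃ s : C ⊗ Rep.ofMulAction R G X ⟶ B ⊗ Rep.ofMulAction R G X,
        s ≫ (p ▷ Rep.ofMulAction R G X) = 𝟙 (C ⊗ Rep.ofMulAction R G X) := by
  classical
  have rmulC : ∀ (a b : G) (v : C.V), C.ρ a (C.ρ b v) = C.ρ (a * b) v := by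
    intro a b v
    rw [map_mul]
    rfl
  have rmulB : ∀ (a b : G) (v : B.V), B.ρ a (B.ρ b v) = B.ρ (a * b) v := by
    intro a b v
    rw [map_mul]
    rfl
  constructor
  · intro hF
    have hstab : ∀ x : X, MulAction.stabilizer G x ∈ F := fun x =>
      (hX _).2 ⟨x, fun h hh => hh⟩
    choose s hs1 hs2 using fun x : X => hF _ (hstab x)
    have hrep : ∀ x : X, ∃ g : G,
        g • (Quotient.mk (MulAction.orbitRel G X) x).out = x := by
      intro x
      obtain ⟨g, hg⟩ := MulAction.mem_orbit_iff.1
        (MulAction.orbitRel_apply.1 (Quotient.mk_out (s := MulAction.orbitRel G X) x))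
      exact ⟨g⁻¹, by rw [← hg, inv_smul_smul]⟩
    choose gg hgg using hrep
    set rep : X → X := fun x => (Quotient.mk (MulAction.orbitRel G X) x).out with hrepdef
    set σ : X → (C.V →ₗ[R] B.V) := fun x =>
      (B.ρ (gg x)) ∘ₗ (s (rep x)) ∘ₗ (C.ρ (gg x)⁻¹) with hσ
    have hσp : ∀ x c, p.hom (σ x c) = c := by
      intro x c
      calc p.hom (σ x c)
          = p.hom (B.ρ (gg x) (s (rep x) (C.ρ (gg x)⁻¹ c))) := rfl
        _ = C.ρ (gg x) (p.hom (s (rep x) (C.ρ (gg x)⁻¹ c))) := Rep.hom_comm_apply p _ _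
        _ = C.ρ (gg x) (C.ρ (gg x)⁻¹ c) := congrArg _ (hs1 _ _)
        _ = C.ρ (gg x * (gg x)⁻¹) c := rmulC _ _ _
        _ = c := by rw [mul_inv_cancel, map_one]; rfl
    have hσe : ∀ (g : G) (x : X) (c : C.V), σ (g • x) (C.ρ g c) = B.ρ g (σ x c) := by
      intro g x c
      have hq : rep (g • x) = rep x :=
        congrArg Quotient.out
          (Quotient.sound (MulAction.orbitRel_apply.2 (MulAction.mem_orbit x g)))
      set k : G := (gg x)⁻¹ * g⁻¹ * gg (g • x) with hk
      have hkx : k ∈ MulAction.stabilizer G (rep x) := by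
        have h1 : gg (g • x) • rep (g • x) = g • x := hgg (g • x)
        rw [hq] at h1
        have h2 : gg x • rep x = x := hgg x
        rw [MulAction.mem_stabilizer_iff, hk, mul_smul, mul_smul, h1, inv_smul_smul,
          inv_smul_eq_iff]
        exact h2.symm
      have hgg' : gg (g • x) = g * gg x * k := by rw [hk]; group
      have eC : C.ρ (gg (g • x))⁻¹ (C.ρ g c) = C.ρ k⁻¹ (C.ρ (gg x)⁻¹ c) :=
        calc C.ρ (gg (g • x))⁻¹ (C.ρ g c)
            = C.ρ ((gg (g • x))⁻¹ * g) c := rmulC _ _ _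
          _ = C.ρ (k⁻¹ * (gg x)⁻¹) c := by
              rw [hgg', show (g * gg x * k)⁻¹ * g = k⁻¹ * (gg x)⁻¹ by group]
          _ = C.ρ k⁻¹ (C.ρ (gg x)⁻¹ c) := (rmulC _ _ _).symm
      calc σ (g • x) (C.ρ g c)
          = B.ρ (gg (g • x)) (s (rep (g • x)) (C.ρ (gg (g • x))⁻¹ (C.ρ g c))) := rfl
        _ = B.ρ (gg (g • x)) (s (rep x) (C.ρ (gg (g • x))⁻¹ (C.ρ g c))) := by rw [hq]
        _ = B.ρ (gg (g • x)) (s (rep x) (C.ρ k⁻¹ (C.ρ (gg x)⁻¹ c))) :=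
            congrArg _ (congrArg _ eC)
        _ = B.ρ (gg (g • x)) (B.ρ k⁻¹ (s (rep x) (C.ρ (gg x)⁻¹ c))) :=
            congrArg _ (hs2 (rep x) k⁻¹ (inv_mem hkx) _)
        _ = B.ρ (gg (g • x) * k⁻¹) (s (rep x) (C.ρ (gg x)⁻¹ c)) := rmulB _ _ _
        _ = B.ρ (g * gg x) (s (rep x) (C.ρ (gg x)⁻¹ c)) := by
            rw [hgg', show g * gg x * k * k⁻¹ = g * gg x by group]
        _ = B.ρ g (B.ρ (gg x) (s (rep x) (C.ρ (gg x)⁻¹ c))) := (rmulB _ _ _).symm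
        _ = B.ρ g (σ x c) := rfl
    refine ⟨Rep.ofHom ⟨tensorSec σ, fun g => ?_⟩, ?_⟩
    · refine LinearMap.ext fun t => ?_
      exact tensorSec_equivariant (G := G) (X := X) σ g (C.ρ g) (B.ρ g)
        (fun x c => hσe g x c) t
    · apply Rep.hom_ext
      apply Representation.IntertwiningMap.ext
      refine LinearMap.ext fun t => ?_
      exact tensorSec_section σ p.hom.toLinearMap (fun x c => hσp x c) t
  · rintro ⟨s, hs⟩ H hH
    obtain ⟨x, hx⟩ := (hX H).1 hH
    have h0 : ∀ t : TensorProduct R C.V (MonoidAlgebra R X),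
        TensorProduct.map p.hom.toLinearMap LinearMap.id (s.hom t) = t := by
      intro t
      exact congrArg
        (fun f : (C ⊗ Rep.ofMulAction R G X ⟶ C ⊗ Rep.ofMulAction R G X) => f.hom t) hs
    refine ⟨(projAt x) ∘ₗ s.hom.toLinearMap ∘ₗ
      ((TensorProduct.mk R C.V (MonoidAlgebra R X)).flip (MonoidAlgebra.single x 1)), ?_, ?_⟩
    · intro c
      calc p.hom (projAt x (s.hom (c ⊗ₜ[R] MonoidAlgebra.single x (1 : R))))
          = projAt x (TensorProduct.map p.hom.toLinearMap LinearMap.id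
              (s.hom (c ⊗ₜ[R] MonoidAlgebra.single x (1 : R)))) := (projAt_natural x p.hom.toLinearMap _).symm
        _ = projAt x (c ⊗ₜ[R] MonoidAlgebra.single x (1 : R)) := congrArg _ (h0 _)
        _ = (MonoidAlgebra.single x (1 : R)).coeff x • c := projAt_tmul x c _
        _ = c := by rw [MonoidAlgebra.coeff_single, Finsupp.single_eq_same, one_smul]
    · intro h hh c
      have e1 : (C.ρ h c) ⊗ₜ[R] MonoidAlgebra.single x (1 : R)
          = TensorProduct.map (C.ρ h) (Representation.ofMulAction R G X h)
              (c ⊗ₜ[R] MonoidAlgebra.single x (1 : R)) := by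
        rw [TensorProduct.map_tmul, Representation.ofMulAction_single, hx h hh]
      calc projAt x (s.hom ((C.ρ h c) ⊗ₜ[R] MonoidAlgebra.single x (1 : R)))
          = projAt x (s.hom (TensorProduct.map (C.ρ h)
              (Representation.ofMulAction R G X h)
              (c ⊗ₜ[R] MonoidAlgebra.single x (1 : R)))) :=
            congrArg (fun t => projAt x (s.hom t)) e1
        _ = projAt x (TensorProduct.map (B.ρ h) (Representation.ofMulAction R G X h)
              (s.hom (c ⊗ₜ[R] MonoidAlgebra.single x (1 : R)))) :=
            congrArg (projAt x) (Rep.hom_comm_apply s h _)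
        _ = B.ρ h (projAt x (s.hom (c ⊗ₜ[R] MonoidAlgebra.single x (1 : R)))) :=
            projAt_equivariant x h (hx h hh) (B.ρ h) _
end

section
/- Let G be a finite group, R a commutative ring, H ≤ G a subgroup, and 0 → A → B → C → 0 a short exact sequence of RG-modules. Then the restriction of this sequence to H splits as a sequence of RH-modules if and only if the sequence 0 → A ⊗_R R[G/H] → B ⊗_R R[G/H] → C ⊗_R R[G/H] → 0 (diagonal G-action) splits as a sequence of RG-modules. -/
open CategoryTheory MonoidalCategory Finsupp

section Aux

lemma tensor_finsupp_ext' {R : Type} [CommRing R] {V W : Type} [AddCommGroup V] [Module R V]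
    [AddCommGroup W] [Module R W] {X : Type} (φ ψ : TensorProduct R V (MonoidAlgebra R X) →ₗ[R] W)
    (h : ∀ (v : V) (x : X) (r : R),
      φ (v ⊗ₜ MonoidAlgebra.single x r) = ψ (v ⊗ₜ MonoidAlgebra.single x r)) : ∀ z, φ z = ψ z := by
  suffices hh : φ = ψ by intro z; rw [hh]
  apply TensorProduct.ext
  apply LinearMap.ext; intro v
  apply MonoidAlgebra.lhom_ext'; intro x
  apply LinearMap.ext; intro r
  simpa [MonoidAlgebra.lsingle_apply] using h v x r

noncomputable def sig {G : Type} [Group G] {R : Type} [CommRing R] {H : Subgroup G}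
    {B C : Rep R G} (s : C.V →ₗ[R] B.V)
    (hHs : ∀ h ∈ H, ∀ c, s (C.ρ h c) = B.ρ h (s c)) : G ⧸ H → (C.V →ₗ[R] B.V) :=
  Quotient.lift (fun g => (B.ρ g ∘ₗ s) ∘ₗ C.ρ g⁻¹) (by
    intro a b hab
    replace hab : a⁻¹ * b ∈ H := QuotientGroup.leftRel_apply.mp hab
    ext c
    simp only [LinearMap.comp_apply]
    have e1 : C.ρ b⁻¹ c = C.ρ (a⁻¹*b)⁻¹ (C.ρ a⁻¹ c) := by
      rw [← Module.End.mul_apply, ← map_mul]; congr 2; group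
    have e2 : s (C.ρ (a⁻¹*b)⁻¹ (C.ρ a⁻¹ c)) = B.ρ (a⁻¹*b)⁻¹ (s (C.ρ a⁻¹ c)) :=
      hHs _ (inv_mem hab) _
    have e3 : ∀ z, B.ρ b (B.ρ (a⁻¹*b)⁻¹ z) = B.ρ a z := fun z => by
      rw [← Module.End.mul_apply, ← map_mul]; congr 2; group
    calc B.ρ a (s (C.ρ a⁻¹ c))
        = B.ρ b (B.ρ (a⁻¹*b)⁻¹ (s (C.ρ a⁻¹ c))) := (e3 _).symm
      _ = B.ρ b (s (C.ρ (a⁻¹*b)⁻¹ (C.ρ a⁻¹ c))) := by rw [e2]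
      _ = B.ρ b (s (C.ρ b⁻¹ c)) := congrArg (B.ρ b) (congrArg s e1.symm))

variable {G : Type} [Group G] {R : Type} [CommRing R] {H : Subgroup G} {B C : Rep.{0} R G}
  (p : B ⟶ C) (s : C.V →ₗ[R] B.V)
  (hHs : ∀ h ∈ H, ∀ c, s (C.ρ h c) = B.ρ h (s c))

lemma sig_mk (g : G) (c : C.V) :
    sig s hHs (QuotientGroup.mk g) c = B.ρ g (s (C.ρ g⁻¹ c)) := rfl

lemma sig_equivariant (g : G) (x : G ⧸ H) (c : C.V) :
    sig s hHs (g • x) (C.ρ g c) = B.ρ g (sig s hHs x c) := by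
  induction x using Quotient.inductionOn with
  | h g' =>
    show sig s hHs (QuotientGroup.mk (g * g')) (C.ρ g c) = _
    rw [sig_mk, sig_mk]
    have e1 : C.ρ (g*g')⁻¹ (C.ρ g c) = C.ρ g'⁻¹ c := by
      rw [← Module.End.mul_apply, ← map_mul]; congr 2; group
    rw [e1, map_mul]; rfl

lemma sig_section (hs : ∀ c, p.hom (s c) = c) (x : G ⧸ H) (c : C.V) :
    p.hom (sig s hHs x c) = c := by
  induction x using Quotient.inductionOn with
  | h g =>
    rw [sig_mk, Rep.hom_comm_apply, hs, ← Module.End.mul_apply, ← map_mul]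
    simp

noncomputable def Slin : TensorProduct R C.V (MonoidAlgebra R (G ⧸ H)) →ₗ[R] TensorProduct R B.V (MonoidAlgebra R (G ⧸ H)) :=
  TensorProduct.lift ((Finsupp.lsum R (fun x : G ⧸ H =>
    LinearMap.toSpanSingleton R (C.V →ₗ[R] TensorProduct R B.V (MonoidAlgebra R (G ⧸ H)))
      (((TensorProduct.mk R B.V (MonoidAlgebra R (G ⧸ H))).flip (MonoidAlgebra.single x 1)) ∘ₗ sig s hHs x)) ∘ₗ (MonoidAlgebra.coeffLinearEquiv R).toLinearMap).flip)

lemma Slin_tmul (c : C.V) (x : G ⧸ H) (r : R) :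
    Slin s hHs (c ⊗ₜ MonoidAlgebra.single x r) = r • (sig s hHs x c ⊗ₜ MonoidAlgebra.single x 1) := by
  simp [Slin, TensorProduct.lift.tmul, LinearMap.flip_apply, Finsupp.lsum_single,
    LinearMap.toSpanSingleton_apply, LinearMap.smul_apply, LinearMap.comp_apply,
    TensorProduct.mk_apply, MonoidAlgebra.coeff_single]

noncomputable def Shom : C ⊗ Rep.ofMulAction R G (G ⧸ H) ⟶ B ⊗ Rep.ofMulAction R G (G ⧸ H) :=
  Rep.ofHom ⟨Slin s hHs, by
    intro g'
    refine LinearMap.ext (tensor_finsupp_ext' _ _ ?_)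
    intro c x r
    set g : G := g' with hg
    show Slin s hHs ((C ⊗ Rep.ofMulAction R G (G ⧸ H)).ρ g (c ⊗ₜ MonoidAlgebra.single x r))
      = (B ⊗ Rep.ofMulAction R G (G ⧸ H)).ρ g (Slin s hHs (c ⊗ₜ MonoidAlgebra.single x r))
    have l1 : (C ⊗ Rep.ofMulAction R G (G ⧸ H)).ρ g (c ⊗ₜ MonoidAlgebra.single x r)
        = C.ρ g c ⊗ₜ MonoidAlgebra.single (g • x) r := by
      show C.ρ g c ⊗ₜ (Representation.ofMulAction R G (G ⧸ H) g) (MonoidAlgebra.single x r) = _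
      rw [Representation.ofMulAction_single]
    rw [l1, Slin_tmul, Slin_tmul, map_smul]
    congr 1
    rw [sig_equivariant]
    show _ = B.ρ g (sig s hHs x c) ⊗ₜ (Representation.ofMulAction R G (G ⧸ H) g) (MonoidAlgebra.single x 1)
    rw [Representation.ofMulAction_single]⟩

lemma Shom_section (hs : ∀ c, p.hom (s c) = c) :
    Shom s hHs ≫ (p ▷ Rep.ofMulAction R G (G ⧸ H)) = 𝟙 (C ⊗ Rep.ofMulAction R G (G ⧸ H)) := by
  apply Rep.hom_ext
  apply Representation.IntertwiningMap.ext
  refine LinearMap.ext (tensor_finsupp_ext' _ _ ?_)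
  intro c x r
  show (p ▷ Rep.ofMulAction R G (G ⧸ H)).hom (Slin s hHs (c ⊗ₜ MonoidAlgebra.single x r))
    = c ⊗ₜ MonoidAlgebra.single x r
  rw [Slin_tmul, map_smul]
  show r • (p.hom (sig s hHs x c) ⊗ₜ MonoidAlgebra.single x 1) = _
  rw [sig_section p s hHs hs, TensorProduct.smul_tmul', TensorProduct.smul_tmul, MonoidAlgebra.smul_single, smul_eq_mul, mul_one]

noncomputable def prmap (D : Rep R G) : TensorProduct R D.V (MonoidAlgebra R (G ⧸ H)) →ₗ[R] D.V :=
  (TensorProduct.rid R D.V).toLinearMap ∘ₗ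
    LinearMap.lTensor D.V (Finsupp.lapply ((1 : G) : G ⧸ H) ∘ₗ (MonoidAlgebra.coeffLinearEquiv R).toLinearMap)

lemma prmap_tmul (D : Rep R G) (d : D.V) (f : MonoidAlgebra R (G ⧸ H)) :
    prmap (H := H) D (d ⊗ₜ f) = f.coeff ((1 : G) : G ⧸ H) • d := by
  simp [prmap, TensorProduct.rid_tmul]

lemma p_prmap (z : TensorProduct R B.V (MonoidAlgebra R (G ⧸ H))) :
    p.hom (prmap (H := H) B z)
      = prmap (H := H) C ((p ▷ Rep.ofMulAction R G (G ⧸ H)).hom z) := by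
  refine tensor_finsupp_ext' (p.hom ∘ₗ prmap (H := H) B)
    ((prmap (H := H) C) ∘ₗ ((p ▷ Rep.ofMulAction R G (G ⧸ H)).hom.toLinearMap : TensorProduct R B.V (MonoidAlgebra R (G ⧸ H)) →ₗ[R] TensorProduct R C.V (MonoidAlgebra R (G ⧸ H)))) ?_ z
  intro b x r
  show p.hom (prmap (H := H) B (b ⊗ₜ MonoidAlgebra.single x r))
    = prmap (H := H) C (p.hom b ⊗ₜ MonoidAlgebra.single x r)
  rw [prmap_tmul, prmap_tmul, map_smul]

lemma smul_one_eq_one_iff (h : G) (hh : h ∈ H) (x : G ⧸ H) :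
    h • x = ((1 : G) : G ⧸ H) ↔ x = ((1 : G) : G ⧸ H) := by
  induction x using Quotient.inductionOn with
  | h g =>
    show (QuotientGroup.mk (h * g) : G ⧸ H) = _ ↔ _
    rw [show (Quotient.mk _ g : G ⧸ H) = QuotientGroup.mk g from rfl]
    rw [QuotientGroup.eq, QuotientGroup.eq]
    simp only [mul_inv_rev, mul_one]
    constructor
    · intro hm
      have := (H.mul_mem_cancel_right (inv_mem hh)).mp hm
      exact this
    · intro hm
      exact H.mul_mem hm (inv_mem hh)

lemma prmap_h (h : G) (hh : h ∈ H) (z : TensorProduct R B.V (MonoidAlgebra R (G ⧸ H))) :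
    prmap (H := H) B ((B ⊗ Rep.ofMulAction R G (G ⧸ H)).ρ h z)
      = B.ρ h (prmap (H := H) B z) := by
  refine tensor_finsupp_ext' ((prmap (H := H) B) ∘ₗ
      ((B ⊗ Rep.ofMulAction R G (G ⧸ H)).ρ h))
    ((B.ρ h : B.V →ₗ[R] B.V) ∘ₗ prmap (H := H) B) ?_ z
  intro b x r
  show prmap (H := H) B ((B ⊗ Rep.ofMulAction R G (G ⧸ H)).ρ h (b ⊗ₜ MonoidAlgebra.single x r))
    = B.ρ h (prmap (H := H) B (b ⊗ₜ MonoidAlgebra.single x r))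
  have l1 : (B ⊗ Rep.ofMulAction R G (G ⧸ H)).ρ h (b ⊗ₜ MonoidAlgebra.single x r)
      = B.ρ h b ⊗ₜ MonoidAlgebra.single (h • x) r := by
    show B.ρ h b ⊗ₜ (Representation.ofMulAction R G (G ⧸ H) h) (MonoidAlgebra.single x r) = _
    rw [Representation.ofMulAction_single]
  rw [l1, prmap_tmul, prmap_tmul, map_smul]
  congr 1
  rw [show h • x = ((h : G) • x) from rfl]
  by_cases hx : x = ((1 : G) : G ⧸ H)
  · rw [show (MonoidAlgebra.single (h • x) r).coeff ((1 : G) : G ⧸ H) = r from by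
        rw [(smul_one_eq_one_iff h hh x).mpr hx]; exact Finsupp.single_eq_same,
      hx, MonoidAlgebra.coeff_single, Finsupp.single_eq_same]
  · rw [MonoidAlgebra.coeff_single, MonoidAlgebra.coeff_single,
      Finsupp.single_eq_of_ne' (fun hc => hx ((smul_one_eq_one_iff h hh x).mp hc)),
      Finsupp.single_eq_of_ne' hx]


end Aux


/-- Let `G` be a finite group, `R` a commutative ring, `H ≤ G` a
subgroup, and `0 → A → B → C → 0` a short exact sequence of `RG`-modules.  Then the
restriction of this sequence to `H` splits as a sequence of `RH`-modules if and only if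
the sequence `0 → A ⊗ R[G/H] → B ⊗ R[G/H] → C ⊗ R[G/H] → 0` (with the diagonal
`G`-action) splits as a sequence of `RG`-modules. -/
theorem restrictionSplit_iff_tensorSplit
    (G : Type) [Group G] [Finite G] (R : Type) [CommRing R] (H : Subgroup G)
    (A B C : Rep R G) (i : A ⟶ B) (p : B ⟶ C)
    (hi : Function.Injective i.hom) (hp : Function.Surjective p.hom)
    (hexact : LinearMap.range i.hom.toLinearMap = LinearMap.ker p.hom.toLinearMap) :
    IsHSplitSurj R G H p ↔
      ∃ s : C ⊗ Rep.ofMulAction R G (G ⧸ H) ⟶ B ⊗ Rep.ofMulAction R G (G ⧸ H),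
        s ≫ (p ▷ Rep.ofMulAction R G (G ⧸ H)) = 𝟙 (C ⊗ Rep.ofMulAction R G (G ⧸ H)) := by
  constructor
  · intro hsp
    obtain ⟨s, hs, hHs⟩ := hsp
    exact ⟨Shom s hHs, Shom_section p s hHs hs⟩
  · rintro ⟨S, hS⟩
    have hS' : ∀ z, (p ▷ Rep.ofMulAction R G (G ⧸ H)).hom (S.hom z) = z := by
      intro z
      have := congrArg
        (fun f : (C ⊗ Rep.ofMulAction R G (G ⧸ H) ⟶ C ⊗ Rep.ofMulAction R G (G ⧸ H)) =>
          f.hom z) hS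
      simpa using this
    refine ⟨prmap (H := H) B ∘ₗ (S.hom.toLinearMap : TensorProduct R C.V (MonoidAlgebra R (G ⧸ H)) →ₗ[R] TensorProduct R B.V (MonoidAlgebra R (G ⧸ H))) ∘ₗ
      ((TensorProduct.mk R C.V (MonoidAlgebra R (G ⧸ H))).flip (MonoidAlgebra.single ((1 : G) : G ⧸ H) 1)), ?_, ?_⟩
    · intro c
      show p.hom (prmap (H := H) B (S.hom (c ⊗ₜ MonoidAlgebra.single ((1 : G) : G ⧸ H) 1))) = c
      rw [p_prmap, hS', prmap_tmul, MonoidAlgebra.coeff_single, Finsupp.single_eq_same, one_smul]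
    · intro h hh c
      show prmap (H := H) B (S.hom (C.ρ h c ⊗ₜ MonoidAlgebra.single ((1 : G) : G ⧸ H) 1))
        = B.ρ h (prmap (H := H) B (S.hom (c ⊗ₜ MonoidAlgebra.single ((1 : G) : G ⧸ H) 1)))
      have l1 : C.ρ h c ⊗ₜ[R] MonoidAlgebra.single ((1 : G) : G ⧸ H) (1 : R)
          = (C ⊗ Rep.ofMulAction R G (G ⧸ H)).ρ h (c ⊗ₜ MonoidAlgebra.single ((1 : G) : G ⧸ H) 1) := by
        show _ = C.ρ h c ⊗ₜ
          (Representation.ofMulAction R G (G ⧸ H) h) (MonoidAlgebra.single ((1 : G) : G ⧸ H) 1)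
        rw [Representation.ofMulAction_single,
          (smul_one_eq_one_iff h hh ((1 : G) : G ⧸ H)).mpr rfl]
      rw [l1, Rep.hom_comm_apply S h, prmap_h h hh]
end

section
/- Let G be a finite group, R a commutative ring, F a family of subgroups of G closed under conjugation and under taking subgroups, and Γ = Or_F(G). If P and Q are projective RΓ-modules, then the objectwise tensor product P ⊗_R Q, defined by (P ⊗_R Q)(G/H) = P(G/H) ⊗_R Q(G/H) with structure maps (P ⊗_R Q)(f) = P(f) ⊗ Q(f), is a projective RΓ-module. -/
open CategoryTheory MonoidalCategory

/-- Objects of the orbit category `Γ = Or_F(G)`: the orbits `G/H` with `H ∈ F`,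
recorded by the subgroup `H`. -/
structure OrbitCat (G : Type) [Group G] (F : Set (Subgroup G)) : Type where
  H : Subgroup G
  mem : H ∈ F

/-- Morphisms `G/H → G/K` in the orbit category are the `G`-equivariant maps. -/
instance {G : Type} [Group G] {F : Set (Subgroup G)} : Category (OrbitCat G F) where
  Hom X Y := {f : G ⧸ X.H → G ⧸ Y.H // ∀ (g : G) (x : G ⧸ X.H), f (g • x) = g • f x}
  id X := ⟨id, fun _ _ => rfl⟩
  comp f g := ⟨g.1 ∘ f.1, fun a x => by simp [f.2, g.2]⟩

/-- The orbit category viewed inside the category of `G`-sets. -/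
def orbitToAction (G : Type) [Group G] (F : Set (Subgroup G)) :
    OrbitCat G F ⥤ Action (Type) (MonCat.of G) where
  obj X := Action.ofMulAction G (G ⧸ X.H)
  map f := { hom := TypeCat.ofHom f.1, comm := by intro g; ext x; exact f.2 g x }
  map_id X := rfl
  map_comp f g := rfl

/-- The category of `RΓ`-modules: contravariant functors from the orbit category
`Γ = Or_F(G)` to the category of `R`-modules. -/
abbrev OrbitModule (R : Type) [CommRing R] (G : Type) [Group G] (F : Set (Subgroup G)) :
    Type _ := (OrbitCat G F)ᵒᵖ ⥤ ModuleCat R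

/-- The constant `RΓ`-module `R̲`, with value `R` at every object and all structure
maps the identity. -/
def constMod (R : Type) [CommRing R] (G : Type) [Group G] (F : Set (Subgroup G)) :
    OrbitModule R G F := (CategoryTheory.Functor.const _).obj (ModuleCat.of R R)

/-- The linearization functor sending `G/H` to the permutation representation `R[G/H]`. -/
noncomputable def linOrbit (R : Type) [CommRing R] (G : Type) [Group G]
    (F : Set (Subgroup G)) : OrbitCat G F ⥤ Rep R G :=
  orbitToAction G F ⋙ Rep.linearization R G

/-- The `RΓ`-module `M^?` attached to an `RG`-module `M`, whose value at `G/H` is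
`Hom_{RG}(R[G/H], M) ≅ M^H`, with structure maps induced by composition (i.e. the usual
restriction and conjugation maps on fixed points). -/
noncomputable def fixedPointsMod (R : Type) [CommRing R] (G : Type) [Group G]
    (F : Set (Subgroup G)) (M : Rep R G) : OrbitModule R G F :=
  (linOrbit R G F).op ⋙ (CategoryTheory.linearYoneda R (Rep R G)).obj M

namespace ProjAux
variable {G : Type} [Group G] {F : Set (Subgroup G)} {R : Type} [CommRing R]

variable (R) in
/-- The free orbit module on generators `i : I` placed at objects `o i`. -/
noncomputable def freeOM {I : Type} (o : I → OrbitCat G F) : OrbitModule R G F where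
  obj e := ModuleCat.of R ((Σ i : I, (e.unop ⟶ o i)) →₀ R)
  map {e e'} θ := ModuleCat.ofHom (Finsupp.lmapDomain R R (fun x : (Σ i : I, (e.unop ⟶ o i)) =>
    (⟨x.1, θ.unop ≫ x.2⟩ : Σ i : I, (e'.unop ⟶ o i))))
  map_id e := by
    have : (fun x : (Σ i : I, (e.unop ⟶ o i)) =>
        (⟨x.1, (𝟙 e).unop ≫ x.2⟩ : Σ i : I, (e.unop ⟶ o i))) = id := by
      funext x; simp
    rw [this, Finsupp.lmapDomain_id]; rfl
  map_comp {e e' e''} θ η := by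
    have : (fun x : (Σ i : I, (e.unop ⟶ o i)) =>
        (⟨x.1, (θ ≫ η).unop ≫ x.2⟩ : Σ i : I, (e''.unop ⟶ o i))) =
        (fun x : (Σ i : I, (e'.unop ⟶ o i)) =>
        (⟨x.1, η.unop ≫ x.2⟩ : Σ i : I, (e''.unop ⟶ o i))) ∘
        (fun x : (Σ i : I, (e.unop ⟶ o i)) =>
        (⟨x.1, θ.unop ≫ x.2⟩ : Σ i : I, (e'.unop ⟶ o i))) := by
      funext x; simp
    rw [this, Finsupp.lmapDomain_comp]; rfl

lemma freeOM_map_single {I : Type} (o : I → OrbitCat G F) {e e' : (OrbitCat G F)ᵒᵖ}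
    (θ : e ⟶ e') (x : Σ i : I, (e.unop ⟶ o i)) :
    (freeOM R o).map θ (Finsupp.single x (1:R)) =
      Finsupp.single (⟨x.1, θ.unop ≫ x.2⟩ : Σ i : I, (e'.unop ⟶ o i)) (1:R) :=
  Finsupp.mapDomain_single

lemma freeOM_hom_ext {I : Type} {o : I → OrbitCat G F} {e : (OrbitCat G F)ᵒᵖ}
    {M : ModuleCat R} {f g : (freeOM R o).obj e ⟶ M}
    (h : ∀ x, f (Finsupp.single x (1:R)) = g (Finsupp.single x (1:R))) : f = g :=
  ModuleCat.hom_ext (Finsupp.lhom_ext' fun x => LinearMap.ext_ring (h x))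

/-- Descend a function on generators to a module map. -/
noncomputable def freeOMDesc {I : Type} {o : I → OrbitCat G F} {e : (OrbitCat G F)ᵒᵖ}
    {M : ModuleCat R} (φ : (Σ i : I, (e.unop ⟶ o i)) → M) : (freeOM R o).obj e ⟶ M :=
  ModuleCat.ofHom (Finsupp.lift M R _ φ)

@[simp] lemma freeOMDesc_single {I : Type} {o : I → OrbitCat G F} {e : (OrbitCat G F)ᵒᵖ}
    {M : ModuleCat R} (φ : (Σ i : I, (e.unop ⟶ o i)) → M) (x) :
    freeOMDesc φ (Finsupp.single x (1:R)) = φ x := by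
  dsimp [freeOMDesc]
  erw [Finsupp.lift_apply, Finsupp.sum_single_index]
  all_goals simp


lemma projective_of_retract {C : Type*} [Category C] {X Y : C}
    (u : X ⟶ Y) (r : Y ⟶ X) (hur : u ≫ r = 𝟙 X) (hY : Projective Y) : Projective X where
  factors {E Z} f p hp := by
    obtain ⟨f', hf'⟩ := hY.factors (r ≫ f) p
    exact ⟨u ≫ f', by rw [Category.assoc, hf', ← Category.assoc, hur, Category.id_comp]⟩

lemma projective_freeOM {I : Type} (o : I → OrbitCat G F) :
    Projective (freeOM R o) where
  factors {M N} f p hp := by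
    have hsurj : ∀ e, Function.Surjective (p.app e) := fun e =>
      (ModuleCat.epi_iff_surjective _).mp inferInstance
    choose s hs using hsurj
    set a : ∀ i : I, M.obj (Opposite.op (o i)) := fun i =>
      s (Opposite.op (o i)) (f.app _ (Finsupp.single (⟨i, 𝟙 (o i)⟩ : Σ i' : I, (o i ⟶ o i')) (1:R))) with ha
    refine ⟨{ app := fun e => freeOMDesc (fun x => M.map x.2.op (a x.1)), naturality := ?_ }, ?_⟩
    · intro e e' θ
      apply freeOM_hom_ext
      intro x
      change freeOMDesc _ ((freeOM R o).map θ (Finsupp.single x 1)) =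
        M.map θ (freeOMDesc _ (Finsupp.single x 1))
      rw [freeOM_map_single, freeOMDesc_single, freeOMDesc_single]
      have : (θ.unop ≫ x.2).op = x.2.op ≫ θ := rfl
      rw [this, M.map_comp]
      rfl
    · apply NatTrans.ext; funext e
      apply freeOM_hom_ext
      intro x
      change p.app e (freeOMDesc _ (Finsupp.single x 1)) = f.app e (Finsupp.single x 1)
      rw [freeOMDesc_single]
      have h1 : p.app e (M.map x.2.op (a x.1)) = N.map x.2.op (p.app _ (a x.1)) :=
        ConcreteCategory.congr_hom (p.naturality x.2.op) (a x.1)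
      rw [h1, hs]
      have h2 : N.map x.2.op (f.app _ (Finsupp.single ⟨x.1, 𝟙 (o x.1)⟩ (1:R)))
          = f.app e ((freeOM R o).map x.2.op (Finsupp.single ⟨x.1, 𝟙 (o x.1)⟩ (1:R))) :=
        (ConcreteCategory.congr_hom (f.naturality x.2.op) _).symm
      rw [h2, freeOM_map_single]
      congr 1


variable (R) in
/-- The canonical cover of an orbit module by a free one. -/
noncomputable def coverHom (P : OrbitModule R G F) :
    freeOM R (fun i : (Σ c : OrbitCat G F, P.obj (Opposite.op c)) => i.1) ⟶ P where
  app e := freeOMDesc (fun x => P.map x.2.op x.1.2)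
  naturality := by
    intro e e' θ
    apply freeOM_hom_ext
    intro x
    change freeOMDesc _ ((freeOM R _).map θ (Finsupp.single x 1)) =
      P.map θ (freeOMDesc _ (Finsupp.single x 1))
    rw [freeOM_map_single, freeOMDesc_single, freeOMDesc_single]
    have : (θ.unop ≫ x.2).op = x.2.op ≫ θ := rfl
    rw [this, P.map_comp]
    rfl

set_option maxHeartbeats 1000000 in
instance (P : OrbitModule R G F) : Epi (coverHom R P) := by
  have : ∀ e, Epi ((coverHom R P).app e) := by
    intro e
    obtain ⟨e⟩ := e
    rw [ModuleCat.epi_iff_surjective]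
    intro m
    refine ⟨Finsupp.single (⟨⟨e, m⟩, 𝟙 e⟩ : Σ i : (Σ c : OrbitCat G F, P.obj (Opposite.op c)), (e ⟶ i.1)) (1:R), ?_⟩
    have hd := freeOMDesc_single (R:=R) (M := P.obj (Opposite.op e))
      (fun x : (Σ i : (Σ c : OrbitCat G F, P.obj (Opposite.op c)), (e ⟶ i.1)) =>
        P.map x.2.op x.1.2) ⟨⟨e, m⟩, 𝟙 e⟩
    refine hd.trans ?_
    change P.map (𝟙 (Opposite.op e)) m = m
    rw [P.map_id]
    rfl
  exact NatTrans.epi_of_epi_app _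


section Orbits

variable (G F) in
/-- The product `G/c × G/d` as a `G`-set. -/
abbrev TT (c d : OrbitCat G F) : Type := (G ⧸ c.H) × (G ⧸ d.H)

variable (G F) in
/-- The set of `G`-orbits of `G/c × G/d`. -/
abbrev OmT (c d : OrbitCat G F) : Type := Quotient (MulAction.orbitRel G (TT G F c d))

lemma stab_mem (hconj : ∀ H ∈ F, ∀ g : G, Subgroup.map (MulAut.conj g).toMonoidHom H ∈ F)
    (hsub : ∀ H ∈ F, ∀ K : Subgroup G, K ≤ H → K ∈ F) (c d : OrbitCat G F) (t : TT G F c d) :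
    MulAction.stabilizer G t ∈ F := by
  apply hsub _ (hconj c.H c.mem t.1.out)
  intro s hs
  have hfix : s • t = t := hs
  have h1 : s • t.1 = t.1 := congrArg Prod.fst hfix
  rw [Subgroup.mem_map_equiv, MulAut.conj_symm_apply]
  have h2 : ((s * t.1.out : G) : G ⧸ c.H) = (t.1.out : G ⧸ c.H) := by
    have := QuotientGroup.out_eq' t.1
    calc ((s * t.1.out : G) : G ⧸ c.H) = s • (t.1.out : G ⧸ c.H) := rfl
      _ = s • t.1 := by rw [this]
      _ = t.1 := h1
      _ = _ := this.symm
  have h3 : t.1.out⁻¹ * s⁻¹ * t.1.out ∈ c.H := by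
    have := QuotientGroup.eq.mp h2
    simpa [mul_inv_rev, mul_assoc] using this
  have h4 : t.1.out⁻¹ * s * t.1.out = (t.1.out⁻¹ * s⁻¹ * t.1.out)⁻¹ := by group
  rw [h4]
  exact inv_mem h3

/-- The object of the orbit category attached to an orbit of `G/c × G/d`. -/
noncomputable def cOm (hconj : ∀ H ∈ F, ∀ g : G, Subgroup.map (MulAut.conj g).toMonoidHom H ∈ F)
    (hsub : ∀ H ∈ F, ∀ K : Subgroup G, K ≤ H → K ∈ F) (c d : OrbitCat G F) (ω : OmT G F c d) : OrbitCat G F :=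
  ⟨MulAction.stabilizer G ω.out, stab_mem hconj hsub c d ω.out⟩

/-- First projection `G/stab(t_ω) ⟶ G/c`. -/
noncomputable def toFst (hconj : ∀ H ∈ F, ∀ g : G, Subgroup.map (MulAut.conj g).toMonoidHom H ∈ F)
    (hsub : ∀ H ∈ F, ∀ K : Subgroup G, K ≤ H → K ∈ F) (c d : OrbitCat G F) (ω : OmT G F c d) : cOm hconj hsub c d ω ⟶ c := by
  refine ⟨fun u => Quotient.liftOn' u (fun g => g • ω.out.1) ?_, ?_⟩
  · intro a b hab
    rw [QuotientGroup.leftRel_apply] at hab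
    have h : (a⁻¹ * b) • ω.out = ω.out := hab
    have h1 : (a⁻¹ * b) • ω.out.1 = ω.out.1 := congrArg Prod.fst h
    calc a • ω.out.1 = a • ((a⁻¹ * b) • ω.out.1) := by rw [h1]
      _ = b • ω.out.1 := by rw [smul_smul, mul_inv_cancel_left]
  · intro g u
    refine Quotient.inductionOn' u (fun a => ?_)
    show Quotient.liftOn' (Quotient.mk'' (g * a)) _ _ = g • Quotient.liftOn' (Quotient.mk'' a) _ _
    rw [Quotient.liftOn'_mk'', Quotient.liftOn'_mk'', mul_smul]

/-- Second projection `G/stab(t_ω) ⟶ G/d`. -/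
noncomputable def toSnd (hconj : ∀ H ∈ F, ∀ g : G, Subgroup.map (MulAut.conj g).toMonoidHom H ∈ F)
    (hsub : ∀ H ∈ F, ∀ K : Subgroup G, K ≤ H → K ∈ F) (c d : OrbitCat G F) (ω : OmT G F c d) : cOm hconj hsub c d ω ⟶ d := by
  refine ⟨fun u => Quotient.liftOn' u (fun g => g • ω.out.2) ?_, ?_⟩
  · intro a b hab
    rw [QuotientGroup.leftRel_apply] at hab
    have h : (a⁻¹ * b) • ω.out = ω.out := hab
    have h1 : (a⁻¹ * b) • ω.out.2 = ω.out.2 := congrArg Prod.snd h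
    calc a • ω.out.2 = a • ((a⁻¹ * b) • ω.out.2) := by rw [h1]
      _ = b • ω.out.2 := by rw [smul_smul, mul_inv_cancel_left]
  · intro g u
    refine Quotient.inductionOn' u (fun a => ?_)
    show Quotient.liftOn' (Quotient.mk'' (g * a)) _ _ = g • Quotient.liftOn' (Quotient.mk'' a) _ _
    rw [Quotient.liftOn'_mk'', Quotient.liftOn'_mk'', mul_smul]


section Elements

variable {e e' c d : OrbitCat G F}

/-- The point of `G/c × G/d` attached to a pair of maps out of `G/e`. -/
def txy (k : e ⟶ c) (l : e ⟶ d) : TT G F c d := (k.1 ((1 : G) : G ⧸ e.H), l.1 ((1 : G) : G ⧸ e.H))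

/-- The orbit of `txy`. -/
def omxy (k : e ⟶ c) (l : e ⟶ d) : OmT G F c d := Quotient.mk'' (txy k l)

lemma coe_eq_smul_one {H : Subgroup G} (u : G) :
    ((u : G) : G ⧸ H) = u • ((1 : G) : G ⧸ H) := by
  have h : ((u : G) : G ⧸ H) = ((u * 1 : G) : G ⧸ H) := by rw [mul_one]
  exact h

lemma hom_apply_coe (k : e ⟶ c) (u : G) :
    k.1 ((u : G) : G ⧸ e.H) = u • k.1 ((1 : G) : G ⧸ e.H) := by
  rw [coe_eq_smul_one u, k.2]

lemma txy_comp (τ : e' ⟶ e) (k : e ⟶ c) (l : e ⟶ d) :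
    txy (τ ≫ k) (τ ≫ l) = (τ.1 ((1 : G) : G ⧸ e'.H)).out • txy k l := by
  set a := (τ.1 ((1 : G) : G ⧸ e'.H)).out with ha
  have hτ : τ.1 ((1 : G) : G ⧸ e'.H) = ((a : G) : G ⧸ e.H) := (QuotientGroup.out_eq' _).symm
  have h1 : (τ ≫ k).1 ((1 : G) : G ⧸ e'.H) = a • k.1 ((1 : G) : G ⧸ e.H) := by
    show k.1 (τ.1 _) = _
    rw [hτ, hom_apply_coe]
  have h2 : (τ ≫ l).1 ((1 : G) : G ⧸ e'.H) = a • l.1 ((1 : G) : G ⧸ e.H) := by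
    show l.1 (τ.1 _) = _
    rw [hτ, hom_apply_coe]
  exact Prod.ext h1 h2

lemma omxy_comp (τ : e' ⟶ e) (k : e ⟶ c) (l : e ⟶ d) :
    omxy (τ ≫ k) (τ ≫ l) = omxy k l := by
  apply Quotient.sound'
  rw [MulAction.orbitRel_apply, MulAction.mem_orbit_iff]
  exact ⟨(τ.1 ((1 : G) : G ⧸ e'.H)).out, (txy_comp τ k l).symm⟩

lemma exists_g0 (k : e ⟶ c) (l : e ⟶ d) : ∃ g : G, g • (omxy k l).out = txy k l := by
  have h : Quotient.mk'' ((omxy k l).out) = omxy k l := Quotient.out_eq' _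
  have h2 := Quotient.exact' (s₁ := MulAction.orbitRel G (TT G F c d)) h
  rw [MulAction.orbitRel_apply, MulAction.mem_orbit_iff] at h2
  obtain ⟨g, hg⟩ := h2
  exact ⟨g⁻¹, by rw [← hg, inv_smul_smul]⟩

/-- A group element moving the chosen orbit representative to `txy`. -/
noncomputable def g0 (k : e ⟶ c) (l : e ⟶ d) : G := (exists_g0 k l).choose

lemma g0_spec (k : e ⟶ c) (l : e ⟶ d) : (g0 k l) • (omxy k l).out = txy k l :=
  (exists_g0 k l).choose_spec

lemma eH_fixes (k : e ⟶ c) (l : e ⟶ d) {h : G} (hh : h ∈ e.H) :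
    h • txy k l = txy k l := by
  have h1 : ((h : G) : G ⧸ e.H) = ((1 : G) : G ⧸ e.H) := by
    rw [QuotientGroup.eq]
    simpa using inv_mem hh
  refine Prod.ext ?_ ?_
  · show h • k.1 _ = k.1 _
    rw [← hom_apply_coe, h1]
  · show h • l.1 _ = l.1 _
    rw [← hom_apply_coe, h1]

variable (hconj : ∀ H ∈ F, ∀ g : G, Subgroup.map (MulAut.conj g).toMonoidHom H ∈ F)
variable (hsub : ∀ H ∈ F, ∀ K : Subgroup G, K ≤ H → K ∈ F)

/-- The canonical map `G/e ⟶ G/stab` classifying the pair `(k, l)`. -/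
noncomputable def psiH (k : e ⟶ c) (l : e ⟶ d) : e ⟶ cOm hconj hsub c d (omxy k l) := by
  refine ⟨fun u => Quotient.liftOn' u (fun g => ((g * g0 k l : G) : G ⧸ (cOm hconj hsub c d (omxy k l)).H)) ?_, ?_⟩
  · intro a b hab
    rw [QuotientGroup.leftRel_apply] at hab
    rw [QuotientGroup.eq]
    show (a * g0 k l)⁻¹ * (b * g0 k l) ∈ MulAction.stabilizer G (omxy k l).out
    rw [MulAction.mem_stabilizer_iff]
    have key : ((g0 k l)⁻¹ * (a⁻¹ * b) * g0 k l) • (omxy k l).out = (omxy k l).out := by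
      rw [mul_smul, mul_smul, g0_spec, eH_fixes k l hab, ← g0_spec k l, inv_smul_smul]
    calc ((a * g0 k l)⁻¹ * (b * g0 k l)) • (omxy k l).out
        = ((g0 k l)⁻¹ * (a⁻¹ * b) * g0 k l) • (omxy k l).out := by
          congr 1; group
      _ = (omxy k l).out := key
  · intro g u
    refine Quotient.inductionOn' u (fun a => ?_)
    show Quotient.liftOn' (Quotient.mk'' (g * a)) _ _ = g • Quotient.liftOn' (Quotient.mk'' a) _ _
    rw [Quotient.liftOn'_mk'', Quotient.liftOn'_mk'']
    show _ = ((g * (a * g0 k l) : G) : G ⧸ (cOm hconj hsub c d (omxy k l)).H)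
    rw [mul_assoc]

lemma psiH_apply (k : e ⟶ c) (l : e ⟶ d) (u : G) :
    (psiH hconj hsub k l).1 ((u : G) : G ⧸ e.H) =
      ((u * g0 k l : G) : G ⧸ (cOm hconj hsub c d (omxy k l)).H) := rfl

lemma psiH_fst (k : e ⟶ c) (l : e ⟶ d) :
    psiH hconj hsub k l ≫ toFst hconj hsub c d (omxy k l) = k := by
  apply Subtype.ext
  funext u
  refine Quotient.inductionOn' u (fun a => ?_)
  show (toFst hconj hsub c d (omxy k l)).1 ((psiH hconj hsub k l).1 (Quotient.mk'' a)) = _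
  have h1 : (psiH hconj hsub k l).1 (Quotient.mk'' a) = ((a * g0 k l : G) : G ⧸ _) :=
    psiH_apply hconj hsub k l a
  rw [h1]
  show (a * g0 k l) • (omxy k l).out.1 = k.1 (Quotient.mk'' a)
  have h2 : k.1 (Quotient.mk'' a) = a • (txy k l).1 := hom_apply_coe k a
  rw [h2, ← g0_spec k l]
  rw [mul_smul]
  rfl

lemma psiH_snd (k : e ⟶ c) (l : e ⟶ d) :
    psiH hconj hsub k l ≫ toSnd hconj hsub c d (omxy k l) = l := by
  apply Subtype.ext
  funext u
  refine Quotient.inductionOn' u (fun a => ?_)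
  show (toSnd hconj hsub c d (omxy k l)).1 ((psiH hconj hsub k l).1 (Quotient.mk'' a)) = _
  have h1 : (psiH hconj hsub k l).1 (Quotient.mk'' a) = ((a * g0 k l : G) : G ⧸ _) :=
    psiH_apply hconj hsub k l a
  rw [h1]
  show (a * g0 k l) • (omxy k l).out.2 = l.1 (Quotient.mk'' a)
  have h2 : l.1 (Quotient.mk'' a) = a • (txy k l).2 := hom_apply_coe l a
  rw [h2, ← g0_spec k l]
  rw [mul_smul]
  rfl


lemma psiH_comp_val (τ : e' ⟶ e) (k : e ⟶ c) (l : e ⟶ d) (u g' : G)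
    (h : (psiH hconj hsub (τ ≫ k) (τ ≫ l)).1 ((u : G) : G ⧸ e'.H) =
      ((g' : G) : G ⧸ (cOm hconj hsub c d (omxy (τ ≫ k) (τ ≫ l))).H)) :
    (τ ≫ psiH hconj hsub k l).1 ((u : G) : G ⧸ e'.H) =
      ((g' : G) : G ⧸ (cOm hconj hsub c d (omxy k l)).H) := by
  set a := (τ.1 ((1 : G) : G ⧸ e'.H)).out with ha
  set g₁ := g0 (τ ≫ k) (τ ≫ l) with hg₁
  set g₂ := g0 k l with hg₂
  have hout : (omxy (τ ≫ k) (τ ≫ l)).out = (omxy k l).out := by rw [omxy_comp]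
  replace h := (psiH_apply hconj hsub (τ ≫ k) (τ ≫ l) u).symm.trans h
  have hs : ((u * g₁)⁻¹ * g') • (omxy (τ ≫ k) (τ ≫ l)).out = (omxy (τ ≫ k) (τ ≫ l)).out :=
    QuotientGroup.eq.mp h
  set s := (u * g₁)⁻¹ * g' with hsdef
  have hg' : g' = u * (g₁ * s) := by rw [hsdef]; group
  have hτ1 : τ.1 ((1 : G) : G ⧸ e'.H) = ((a : G) : G ⧸ e.H) := (QuotientGroup.out_eq' _).symm
  have hτu : (τ ≫ psiH hconj hsub k l).1 ((u : G) : G ⧸ e'.H) =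
      ((u * a * g₂ : G) : G ⧸ (cOm hconj hsub c d (omxy k l)).H) := by
    show (psiH hconj hsub k l).1 (τ.1 _) = _
    rw [hom_apply_coe τ u, hτ1]
    have h2 : (u • ((a : G) : G ⧸ e.H)) = ((u * a : G) : G ⧸ e.H) := rfl
    rw [h2, psiH_apply]
  rw [hτu, QuotientGroup.eq]
  show (u * a * g₂)⁻¹ * g' ∈ MulAction.stabilizer G (omxy k l).out
  rw [MulAction.mem_stabilizer_iff, hg']
  have hcalc : (u * a * g₂)⁻¹ * (u * (g₁ * s)) = g₂⁻¹ * (a⁻¹ * (g₁ * s)) := by group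
  rw [hcalc]
  have h5 : s • (omxy k l).out = (omxy k l).out := by rw [← hout]; exact hs
  have h6 : g₁ • (omxy k l).out = a • (g₂ • (omxy k l).out) := by
    rw [g0_spec k l, ← hout, g0_spec, txy_comp, ← ha]
  rw [mul_smul, mul_smul, mul_smul, h5, h6, inv_smul_smul, inv_smul_smul]

lemma sigma_hom_eq {I'' : Type} (o'' : I'' → OrbitCat G F) {e : OrbitCat G F}
    {z₁ z₂ : I''} (h : z₁ = z₂) (f₁ : e ⟶ o'' z₁) (f₂ : e ⟶ o'' z₂)
    (hval : ∀ u g' : G, f₁.1 ((u : G) : G ⧸ e.H) = ((g' : G) : G ⧸ (o'' z₁).H) →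
      f₂.1 ((u : G) : G ⧸ e.H) = ((g' : G) : G ⧸ (o'' z₂).H)) :
    (⟨z₁, f₁⟩ : Σ z : I'', (e ⟶ o'' z)) = ⟨z₂, f₂⟩ := by
  subst h
  suffices hf : f₁ = f₂ by rw [hf]
  apply Subtype.ext
  funext u
  refine Quotient.inductionOn' u (fun b => ?_)
  have h1 : f₁.1 ((b : G) : G ⧸ e.H) = (((f₁.1 ((b : G) : G ⧸ e.H)).out : G) : G ⧸ (o'' z₁).H) :=
    (QuotientGroup.out_eq' _).symm
  have h2 := hval b _ h1
  exact h1.trans h2.symm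

end Elements


section Free2
variable {I : Type} {I' : Type}

variable (R) in
/-- The objectwise free module on pairs of generators. -/
noncomputable def freeOM2 (o : I → OrbitCat G F) (o' : I' → OrbitCat G F) :
    OrbitModule R G F where
  obj e := ModuleCat.of R
    (((Σ i : I, (e.unop ⟶ o i)) × (Σ j : I', (e.unop ⟶ o' j))) →₀ R)
  map {e e'} θ := ModuleCat.ofHom (Finsupp.lmapDomain R R
    (fun x : ((Σ i : I, (e.unop ⟶ o i)) × (Σ j : I', (e.unop ⟶ o' j))) =>
      ((⟨x.1.1, θ.unop ≫ x.1.2⟩, ⟨x.2.1, θ.unop ≫ x.2.2⟩) :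
        (Σ i : I, (e'.unop ⟶ o i)) × (Σ j : I', (e'.unop ⟶ o' j)))))
  map_id e := by
    have : (fun x : ((Σ i : I, (e.unop ⟶ o i)) × (Σ j : I', (e.unop ⟶ o' j))) =>
        ((⟨x.1.1, (𝟙 e).unop ≫ x.1.2⟩, ⟨x.2.1, (𝟙 e).unop ≫ x.2.2⟩) :
          (Σ i : I, (e.unop ⟶ o i)) × (Σ j : I', (e.unop ⟶ o' j)))) = id := by
      funext x; simp
    rw [this, Finsupp.lmapDomain_id]; rfl
  map_comp {e e' e''} θ η := by
    have : (fun x : ((Σ i : I, (e.unop ⟶ o i)) × (Σ j : I', (e.unop ⟶ o' j))) =>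
        ((⟨x.1.1, (θ ≫ η).unop ≫ x.1.2⟩, ⟨x.2.1, (θ ≫ η).unop ≫ x.2.2⟩) :
          (Σ i : I, (e''.unop ⟶ o i)) × (Σ j : I', (e''.unop ⟶ o' j)))) =
        (fun x : ((Σ i : I, (e'.unop ⟶ o i)) × (Σ j : I', (e'.unop ⟶ o' j))) =>
        ((⟨x.1.1, η.unop ≫ x.1.2⟩, ⟨x.2.1, η.unop ≫ x.2.2⟩) :
          (Σ i : I, (e''.unop ⟶ o i)) × (Σ j : I', (e''.unop ⟶ o' j)))) ∘
        (fun x : ((Σ i : I, (e.unop ⟶ o i)) × (Σ j : I', (e.unop ⟶ o' j))) =>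
        ((⟨x.1.1, θ.unop ≫ x.1.2⟩, ⟨x.2.1, θ.unop ≫ x.2.2⟩) :
          (Σ i : I, (e'.unop ⟶ o i)) × (Σ j : I', (e'.unop ⟶ o' j)))) := by
      funext x; simp
    rw [this, Finsupp.lmapDomain_comp]; rfl

lemma freeOM2_map_single (o : I → OrbitCat G F) (o' : I' → OrbitCat G F)
    {e e' : (OrbitCat G F)ᵒᵖ} (θ : e ⟶ e')
    (x : (Σ i : I, (e.unop ⟶ o i)) × (Σ j : I', (e.unop ⟶ o' j))) :
    (freeOM2 R o o').map θ (Finsupp.single x (1:R)) =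
      Finsupp.single ((⟨x.1.1, θ.unop ≫ x.1.2⟩, ⟨x.2.1, θ.unop ≫ x.2.2⟩) :
        (Σ i : I, (e'.unop ⟶ o i)) × (Σ j : I', (e'.unop ⟶ o' j))) (1:R) :=
  Finsupp.mapDomain_single

lemma freeOM2_hom_ext {o : I → OrbitCat G F} {o' : I' → OrbitCat G F}
    {e : (OrbitCat G F)ᵒᵖ} {M : ModuleCat R} {f g : (freeOM2 R o o').obj e ⟶ M}
    (h : ∀ x, f (Finsupp.single x (1:R)) = g (Finsupp.single x (1:R))) : f = g :=
  ModuleCat.hom_ext (Finsupp.lhom_ext' fun x => LinearMap.ext_ring (h x))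

variable (hconj : ∀ H ∈ F, ∀ g : G, Subgroup.map (MulAut.conj g).toMonoidHom H ∈ F)
variable (hsub : ∀ H ∈ F, ∀ K : Subgroup G, K ≤ H → K ∈ F)
variable (o : I → OrbitCat G F) (o' : I' → OrbitCat G F)

/-- Index type for the orbit decomposition of the product. -/
abbrev Idx2 : Type := Σ i : I, Σ j : I', OmT G F (o i) (o' j)

/-- Objects for the orbit decomposition of the product. -/
noncomputable def o2 : Idx2 o o' → OrbitCat G F := fun z => cOm hconj hsub _ _ z.2.2

/-- The comparison map realizing `freeOM2` as a retract of a free module. -/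
noncomputable def Phi : freeOM2 R o o' ⟶ freeOM R (o2 hconj hsub o o') where
  app e := ModuleCat.ofHom (Finsupp.lmapDomain R R
    (fun x : ((Σ i : I, (e.unop ⟶ o i)) × (Σ j : I', (e.unop ⟶ o' j))) =>
      (⟨⟨x.1.1, x.2.1, omxy x.1.2 x.2.2⟩, psiH hconj hsub x.1.2 x.2.2⟩ :
        Σ z : Idx2 o o', (e.unop ⟶ o2 hconj hsub o o' z))))
  naturality := by
    intro e e' θ
    apply freeOM2_hom_ext
    intro x
    show Finsupp.lmapDomain R R _ ((freeOM2 R o o').map θ (Finsupp.single x 1)) =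
      (freeOM R (o2 hconj hsub o o')).map θ (Finsupp.lmapDomain R R _ (Finsupp.single x 1))
    rw [freeOM2_map_single, Finsupp.lmapDomain_apply, Finsupp.mapDomain_single,
      Finsupp.lmapDomain_apply, Finsupp.mapDomain_single, freeOM_map_single]
    congr 1
    have hz : (⟨x.1.1, ⟨x.2.1, omxy (θ.unop ≫ x.1.2) (θ.unop ≫ x.2.2)⟩⟩ : Idx2 o o') =
        ⟨x.1.1, ⟨x.2.1, omxy x.1.2 x.2.2⟩⟩ := by rw [omxy_comp]
    exact sigma_hom_eq (o2 hconj hsub o o') hz _ _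
      (psiH_comp_val hconj hsub θ.unop x.1.2 x.2.2)

/-- The splitting of `Phi`. -/
noncomputable def Psi : freeOM R (o2 hconj hsub o o') ⟶ freeOM2 R o o' where
  app e := ModuleCat.ofHom (Finsupp.lmapDomain R R
    (fun x : (Σ z : Idx2 o o', (e.unop ⟶ o2 hconj hsub o o' z)) =>
      ((⟨x.1.1, x.2 ≫ toFst hconj hsub _ _ x.1.2.2⟩,
               ⟨x.1.2.1, x.2 ≫ toSnd hconj hsub _ _ x.1.2.2⟩) :
        (Σ i : I, (e.unop ⟶ o i)) × (Σ j : I', (e.unop ⟶ o' j)))))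
  naturality := by
    intro e e' θ
    apply freeOM_hom_ext
    intro x
    show Finsupp.lmapDomain R R _ ((freeOM R _).map θ (Finsupp.single x 1)) =
      (freeOM2 R o o').map θ (Finsupp.lmapDomain R R _ (Finsupp.single x 1))
    rw [freeOM_map_single, Finsupp.lmapDomain_apply, Finsupp.mapDomain_single,
      Finsupp.lmapDomain_apply, Finsupp.mapDomain_single, freeOM2_map_single]
    congr 1

lemma Phi_Psi : Phi hconj hsub o o' ≫ Psi hconj hsub o o' = 𝟙 (freeOM2 R o o') := by
  apply NatTrans.ext; funext e
  apply freeOM2_hom_ext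
  intro x
  show Finsupp.lmapDomain R R _ (Finsupp.lmapDomain R R _ (Finsupp.single x 1)) =
    Finsupp.single x 1
  simp only [Finsupp.lmapDomain_apply, Finsupp.mapDomain_single]
  congr 1
  exact Prod.ext (congrArg (Sigma.mk x.1.1) (psiH_fst hconj hsub x.1.2 x.2.2))
    (congrArg (Sigma.mk x.2.1) (psiH_snd hconj hsub x.1.2 x.2.2))

include hconj hsub in
lemma projective_freeOM2 : Projective (freeOM2 R o o') :=
  projective_of_retract (Phi hconj hsub o o') (Psi hconj hsub o o')
    (Phi_Psi hconj hsub o o') (projective_freeOM _)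


/-- The objectwise tensor product of free modules is the free module on pairs. -/
noncomputable def tensIso (o : I → OrbitCat G F) (o' : I' → OrbitCat G F) :
    freeOM2 R o o' ≅ (freeOM R o ⊗ freeOM R o') := by
  refine NatIso.ofComponents (fun e =>
    ((finsuppTensorFinsupp' R (Σ i : I, (e.unop ⟶ o i))
      (Σ j : I', (e.unop ⟶ o' j))).symm).toModuleIso) ?_
  intro e e' θ
  apply freeOM2_hom_ext
  intro x
  show (finsuppTensorFinsupp' R _ _).symm ((freeOM2 R o o').map θ (Finsupp.single x (1:R))) =
    ((freeOM R o ⊗ freeOM R o').map θ) ((finsuppTensorFinsupp' R _ _).symm (Finsupp.single x (1:R)))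
  rw [freeOM2_map_single]
  rw [finsuppTensorFinsupp'_symm_single_eq_single_one_tmul,
    finsuppTensorFinsupp'_symm_single_eq_single_one_tmul]
  show _ = ((freeOM R o).map θ ⊗ₘ (freeOM R o').map θ)
    (Finsupp.single x.1 (1:R) ⊗ₜ[R] Finsupp.single x.2 (1:R))
  erw [ModuleCat.MonoidalCategory.tensorHom_tmul]
  rw [freeOM_map_single, freeOM_map_single]
  rfl

end Free2
end Orbits
end ProjAux


/-- Let `Γ = Or_F(G)`.  If `P` and `Q` are projective `RΓ`-modules,
then so is their objectwise tensor product `P ⊗ Q` (the tensor product in the functor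
category `Γᵒᵖ ⥤ Mod_R` is formed objectwise, with structure maps
`(P ⊗ Q)(f) = P(f) ⊗ Q(f)`). -/
theorem projective_tensorObj
    (G : Type) [Group G] [Finite G] (R : Type) [CommRing R]
    (F : Set (Subgroup G))
    (hconj : ∀ H ∈ F, ∀ g : G, Subgroup.map (MulAut.conj g).toMonoidHom H ∈ F)
    (hsub : ∀ H ∈ F, ∀ K : Subgroup G, K ≤ H → K ∈ F)
    (P Q : OrbitModule R G F)
    (hP : Projective P) (hQ : Projective Q) :
    Projective (P ⊗ Q) := by
  classical
  obtain ⟨sP, hsP⟩ := hP.factors (𝟙 P) (ProjAux.coverHom R P)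
  obtain ⟨sQ, hsQ⟩ := hQ.factors (𝟙 Q) (ProjAux.coverHom R Q)
  let oP := fun i : (Σ c : OrbitCat G F, P.obj (Opposite.op c)) => i.1
  let oQ := fun i : (Σ c : OrbitCat G F, Q.obj (Opposite.op c)) => i.1
  refine ProjAux.projective_of_retract
    ((sP ⊗ₘ sQ) ≫ (ProjAux.tensIso oP oQ).inv)
    ((ProjAux.tensIso oP oQ).hom ≫ (ProjAux.coverHom R P ⊗ₘ ProjAux.coverHom R Q))
    ?_ (ProjAux.projective_freeOM2 hconj hsub oP oQ)
  rw [Category.assoc, ← Category.assoc (ProjAux.tensIso oP oQ).inv, Iso.inv_hom_id,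
    Category.id_comp, MonoidalCategory.tensorHom_comp_tensorHom, hsP, hsQ, MonoidalCategory.id_tensorHom_id]
end

section
/- Let G be a finite group, R a commutative ring, F a family of subgroups of G closed under conjugation and under taking subgroups, Γ = Or_F(G), and H, K ∈ F. Then there is an isomorphism of RΓ-modules R[G/H^?] ⊗_R R[G/K^?] ≅ ⊕_{HgK ∈ H\G/K} R[G/(H ∩ gKg^{-1})^?], the direct sum running over a set of representatives of the double cosets H\G/K. -/
open CategoryTheory MonoidalCategory

/-- The `RΓ`-module `R[G/K^?] = R Mor_Γ(-, G/K)`: the free `R`-module on the set of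
`G`-maps `G/H → G/K` (equivalently, on the `H`-fixed points `(G/K)^H`), with structure
maps given by precomposition. -/
noncomputable def freeOrbitMod (R : Type) [CommRing R] (G : Type) [Group G]
    (F : Set (Subgroup G)) (K : OrbitCat G F) : OrbitModule R G F :=
  yoneda.obj K ⋙ ModuleCat.free R

namespace DCAux

variable {G : Type} [Group G] {F : Set (Subgroup G)}

def homMk (X Y : OrbitCat G F) (u : G) (hu : ∀ l ∈ X.H, u⁻¹ * l * u ∈ Y.H) :
    X ⟶ Y :=
  ⟨fun x => Quotient.liftOn' x (fun a => QuotientGroup.mk (a * u))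
    (fun a b h => by
      have h' : a⁻¹ * b ∈ X.H := QuotientGroup.leftRel_apply.mp h
      refine QuotientGroup.eq.mpr ?_
      have h2 := hu _ h'
      have e : (a * u)⁻¹ * (b * u) = u⁻¹ * (a⁻¹ * b) * u := by group
      rwa [e]),
    fun g x => Quotient.inductionOn' x fun a => by
      show QuotientGroup.mk (g * a * u) = QuotientGroup.mk (g * (a * u))
      rw [mul_assoc]⟩

lemma homMk_apply (X Y : OrbitCat G F) (u : G) (hu : ∀ l ∈ X.H, u⁻¹ * l * u ∈ Y.H)
    (a : G) : (homMk X Y u hu).1 (QuotientGroup.mk a) = QuotientGroup.mk (a * u) := rfl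

lemma hom_ext {X Y : OrbitCat G F} {f g : X ⟶ Y}
    (h : f.1 (QuotientGroup.mk 1) = g.1 (QuotientGroup.mk 1)) : f = g := by
  apply Subtype.ext
  funext x
  refine Quotient.inductionOn' x fun a => ?_
  have ha : (Quotient.mk'' a : G ⧸ X.H) = a • (QuotientGroup.mk 1) := by
    show _ = QuotientGroup.mk (a * 1)
    rw [mul_one]
  rw [ha, f.2, g.2, h]

lemma conj_mem {X Y : OrbitCat G F} (f : X ⟶ Y) (u : G)
    (hu : f.1 (QuotientGroup.mk 1) = QuotientGroup.mk u) {l : G} (hl : l ∈ X.H) :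
    u⁻¹ * l * u ∈ Y.H := by
  have h1 : (QuotientGroup.mk l : G ⧸ X.H) = QuotientGroup.mk 1 :=
    QuotientGroup.eq.mpr (by simpa using X.H.inv_mem hl)
  have h2 := f.2 l (QuotientGroup.mk 1)
  have h3 : l • (QuotientGroup.mk 1 : G ⧸ X.H) = QuotientGroup.mk l := by
    show QuotientGroup.mk (l * 1) = _
    rw [mul_one]
  rw [h3, h1, hu] at h2
  have h4 : l • (QuotientGroup.mk u : G ⧸ Y.H) = QuotientGroup.mk (l * u) := rfl
  rw [h4] at h2
  have h5 := QuotientGroup.eq.mp h2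
  rwa [← mul_assoc] at h5

lemma eq_homMk {X Y : OrbitCat G F} (f : X ⟶ Y) (u : G)
    (hu : f.1 (QuotientGroup.mk 1) = QuotientGroup.mk u) :
    f = homMk X Y u (fun _ hl => conj_mem f u hu hl) := by
  apply hom_ext
  rw [hu, homMk_apply, one_mul]

lemma mem_conjmap {K : Subgroup G} {g l : G} :
    l ∈ Subgroup.map (MulAut.conj g).toMonoidHom K ↔ g⁻¹ * l * g ∈ K := by
  rw [Subgroup.mem_map]
  constructor
  · rintro ⟨k, hk, rfl⟩
    have : g⁻¹ * (MulAut.conj g).toMonoidHom k * g = k := by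
      simp [MulAut.conj_apply]
      group
    rwa [this]
  · intro h
    refine ⟨g⁻¹ * l * g, h, ?_⟩
    simp [MulAut.conj_apply]
    group

end DCAux

namespace DCAux

variable {G : Type} [Group G] {F : Set (Subgroup G)}

variable (H K : Subgroup G)

noncomputable def Jsub (q : DoubleCoset.Quotient (H : Set G) (K : Set G)) : Subgroup G :=
  H ⊓ Subgroup.map (MulAut.conj (Quotient.out q)).toMonoidHom K

variable (hH : H ∈ F) (hK : K ∈ F)
  (hJ : ∀ q : DoubleCoset.Quotient (H : Set G) (K : Set G), Jsub H K q ∈ F)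

def Ho : OrbitCat G F := ⟨H, hH⟩
def Ko : OrbitCat G F := ⟨K, hK⟩
noncomputable def Jo (q : DoubleCoset.Quotient (H : Set G) (K : Set G)) : OrbitCat G F := ⟨Jsub H K q, hJ q⟩

lemma mem_Jsub {q : DoubleCoset.Quotient (H : Set G) (K : Set G)} {l : G} :
    l ∈ Jsub H K q ↔ l ∈ H ∧ (Quotient.out q)⁻¹ * l * (Quotient.out q) ∈ K := by
  rw [Jsub, Subgroup.mem_inf, mem_conjmap]

noncomputable def beta1 (q : DoubleCoset.Quotient (H : Set G) (K : Set G)) : Jo H K hJ q ⟶ Ho H hH :=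
  homMk _ _ 1 (fun l hl => by
    simpa [Ho] using ((mem_Jsub H K).mp hl).1)

noncomputable def beta2 (q : DoubleCoset.Quotient (H : Set G) (K : Set G)) : Jo H K hJ q ⟶ Ko K hK :=
  homMk _ _ (Quotient.out q) (fun l hl => ((mem_Jsub H K).mp hl).2)

noncomputable def Bmap (L : OrbitCat G F) :
    (Σ q : DoubleCoset.Quotient (H : Set G) (K : Set G), (L ⟶ Jo H K hJ q)) →
      (L ⟶ Ho H hH) × (L ⟶ Ko K hK) :=
  fun x => (x.2 ≫ beta1 H K hH hJ x.1, x.2 ≫ beta2 H K hK hJ x.1)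

lemma Bmap_bijective (L : OrbitCat G F) : Function.Bijective (Bmap H K hH hK hJ L) := by
  constructor
  · rintro ⟨q, f⟩ ⟨q', f'⟩ hB
    set u := Quotient.out (f.1 (QuotientGroup.mk 1)) with hu_def
    set u' := Quotient.out (f'.1 (QuotientGroup.mk 1)) with hu'_def
    have hu : f.1 (QuotientGroup.mk 1) = QuotientGroup.mk u := (QuotientGroup.out_eq' _).symm
    have hu' : f'.1 (QuotientGroup.mk 1) = QuotientGroup.mk u' := (QuotientGroup.out_eq' _).symm
    have h1 : ((f ≫ beta1 H K hH hJ q).1 (QuotientGroup.mk 1) : G ⧸ H) =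
        (f' ≫ beta1 H K hH hJ q').1 (QuotientGroup.mk 1) := by
      have := congrArg Prod.fst hB
      simp only [Bmap] at this
      rw [this]
    have h2 : ((f ≫ beta2 H K hK hJ q).1 (QuotientGroup.mk 1) : G ⧸ K) =
        (f' ≫ beta2 H K hK hJ q').1 (QuotientGroup.mk 1) := by
      have := congrArg Prod.snd hB
      simp only [Bmap] at this
      rw [this]
    have l1 : (f ≫ beta1 H K hH hJ q).1 (QuotientGroup.mk 1) = QuotientGroup.mk (u * 1) := by
      show (beta1 H K hH hJ q).1 (f.1 (QuotientGroup.mk 1)) = _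
      rw [hu]; rfl
    have l1' : (f' ≫ beta1 H K hH hJ q').1 (QuotientGroup.mk 1) =
        QuotientGroup.mk (u' * 1) := by
      show (beta1 H K hH hJ q').1 (f'.1 (QuotientGroup.mk 1)) = _
      rw [hu']; rfl
    have l2 : (f ≫ beta2 H K hK hJ q).1 (QuotientGroup.mk 1) =
        QuotientGroup.mk (u * Quotient.out q) := by
      show (beta2 H K hK hJ q).1 (f.1 (QuotientGroup.mk 1)) = _
      rw [hu]; rfl
    have l2' : (f' ≫ beta2 H K hK hJ q').1 (QuotientGroup.mk 1) =
        QuotientGroup.mk (u' * Quotient.out q') := by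
      show (beta2 H K hK hJ q').1 (f'.1 (QuotientGroup.mk 1)) = _
      rw [hu']; rfl
    have e1 : (QuotientGroup.mk (u * 1) : G ⧸ (Ho H hH).H) = QuotientGroup.mk (u' * 1) := by
      rw [← l1, ← l1']; exact h1
    have e2 : (QuotientGroup.mk (u * Quotient.out q) : G ⧸ (Ko K hK).H) =
        QuotientGroup.mk (u' * Quotient.out q') := by
      rw [← l2, ← l2']; exact h2
    have hmemH : u⁻¹ * u' ∈ H := by
      have h := QuotientGroup.eq.mp e1
      rw [mul_one, mul_one] at h
      exact h
    have hmemK : (u * Quotient.out q)⁻¹ * (u' * Quotient.out q') ∈ K :=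
      QuotientGroup.eq.mp e2
    have hqq : q = q' := by
      have : DoubleCoset.mk H K (Quotient.out q) = DoubleCoset.mk H K (Quotient.out q') := by
        rw [DoubleCoset.eq]
        refine ⟨(u⁻¹ * u')⁻¹, H.inv_mem hmemH,
          (u * Quotient.out q)⁻¹ * (u' * Quotient.out q'), hmemK, ?_⟩
        group
      rw [DoubleCoset.out_eq', DoubleCoset.out_eq'] at this
      exact this
    subst hqq
    have hff : f = f' := by
      apply hom_ext
      rw [hu, hu']
      refine QuotientGroup.eq.mpr ((mem_Jsub H K).mpr ⟨hmemH, ?_⟩)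
      have : (Quotient.out q)⁻¹ * (u⁻¹ * u') * Quotient.out q =
          (u * Quotient.out q)⁻¹ * (u' * Quotient.out q) := by group
      rw [this]
      exact hmemK
    rw [hff]
  · rintro ⟨f1, f2⟩
    set a := Quotient.out (f1.1 (QuotientGroup.mk 1)) with ha_def
    set b := Quotient.out (f2.1 (QuotientGroup.mk 1)) with hb_def
    have ha : f1.1 (QuotientGroup.mk 1) = QuotientGroup.mk a := (QuotientGroup.out_eq' _).symm
    have hb : f2.1 (QuotientGroup.mk 1) = QuotientGroup.mk b := (QuotientGroup.out_eq' _).symm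
    set q : DoubleCoset.Quotient (H : Set G) (K : Set G) := DoubleCoset.mk H K (a⁻¹ * b) with hq_def
    have hout : DoubleCoset.mk H K (a⁻¹ * b) = DoubleCoset.mk H K (Quotient.out q) := by
      rw [hq_def, DoubleCoset.out_eq']
    obtain ⟨h, hh, k, hk, hab⟩ := (DoubleCoset.eq H K _ _).mp hout.symm
    -- hab : a⁻¹ * b = h * Quotient.out q * k
    have e : a * (h * Quotient.out q * k) = b := by rw [← hab]; group
    have key : a * h * Quotient.out q = b * k⁻¹ := by rw [← e]; group
    have prf : ∀ l ∈ L.H, (a * h)⁻¹ * l * (a * h) ∈ (Jo H K hJ q).H := by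
      intro l hl
      have hA : a⁻¹ * l * a ∈ H := conj_mem f1 a ha hl
      have hB : b⁻¹ * l * b ∈ K := conj_mem f2 b hb hl
      refine (mem_Jsub H K).mpr ⟨?_, ?_⟩
      · have e1 : (a * h)⁻¹ * l * (a * h) = h⁻¹ * (a⁻¹ * l * a) * h := by group
        rw [e1]
        exact H.mul_mem (H.mul_mem (H.inv_mem hh) hA) hh
      · have e2 : (Quotient.out q)⁻¹ * ((a * h)⁻¹ * l * (a * h)) * Quotient.out q
            = (a * h * Quotient.out q)⁻¹ * l * (a * h * Quotient.out q) := by group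
        rw [e2, key]
        have e3 : (b * k⁻¹)⁻¹ * l * (b * k⁻¹) = k * (b⁻¹ * l * b) * k⁻¹ := by group
        rw [e3]
        exact K.mul_mem (K.mul_mem hk hB) (K.inv_mem hk)
    refine ⟨⟨q, homMk L (Jo H K hJ q) (a * h) prf⟩, ?_⟩
    have c1 : (homMk L (Jo H K hJ q) (a * h) prf ≫ beta1 H K hH hJ q).1
        (QuotientGroup.mk 1) = QuotientGroup.mk (1 * (a * h) * 1) := rfl
    have c2 : (homMk L (Jo H K hJ q) (a * h) prf ≫ beta2 H K hK hJ q).1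
        (QuotientGroup.mk 1) = QuotientGroup.mk (1 * (a * h) * Quotient.out q) := rfl
    refine Prod.ext ?_ ?_
    · apply hom_ext
      simp only [Bmap]
      rw [c1, ha]
      refine QuotientGroup.eq.mpr ?_
      have : (1 * (a * h) * 1)⁻¹ * a = h⁻¹ := by group
      rw [this]
      exact H.inv_mem hh
    · apply hom_ext
      simp only [Bmap]
      rw [c2, hb]
      refine QuotientGroup.eq.mpr ?_
      have e4 : (1 : G) * (a * h) * Quotient.out q = b * k⁻¹ := by
        rw [one_mul]; exact key
      rw [e4]
      have : (b * k⁻¹)⁻¹ * b = k := by group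
      rw [this]
      exact hk

end DCAux

namespace DCAux

open CategoryTheory MonoidalCategory Limits
open scoped TensorProduct

variable {G : Type} [Group G] {F : Set (Subgroup G)}
variable (R : Type) [CommRing R]
variable (H K : Subgroup G) (hH : H ∈ F) (hK : K ∈ F)
  (hJ : ∀ q : DoubleCoset.Quotient (H : Set G) (K : Set G), Jsub H K q ∈ F)

noncomputable def theta (q : DoubleCoset.Quotient (H : Set G) (K : Set G)) :
    freeOrbitMod R G F (Jo H K hJ q) ⟶
      freeOrbitMod R G F (Ho H hH) ⊗ freeOrbitMod R G F (Ko K hK) where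
  app L := ModuleCat.freeDesc <| TypeCat.ofHom fun (f : L.unop ⟶ Jo H K hJ q) =>
    (ModuleCat.freeMk (f ≫ beta1 H K hH hJ q) ⊗ₜ[R] ModuleCat.freeMk (f ≫ beta2 H K hK hJ q) :
      ((freeOrbitMod R G F (Ho H hH)).obj L ⊗ (freeOrbitMod R G F (Ko K hK)).obj L : ModuleCat R))
  naturality L L' φ := by
    apply ModuleCat.free_hom_ext
    intro f
    erw [ConcreteCategory.comp_apply, ConcreteCategory.comp_apply, ModuleCat.free_map_apply, ModuleCat.freeDesc_apply, ModuleCat.freeDesc_apply]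
    erw [Monoidal.FunctorCategory.tensorObj_map, ModuleCat.MonoidalCategory.tensorHom_tmul, ModuleCat.free_map_apply, ModuleCat.free_map_apply]
    rfl


lemma theta_app_mk (q : DoubleCoset.Quotient (H : Set G) (K : Set G))
    (L : (OrbitCat G F)ᵒᵖ) (f : L.unop ⟶ Jo H K hJ q) :
    (theta R H K hH hK hJ q).app L (ModuleCat.freeMk f) =
      (ModuleCat.freeMk (f ≫ beta1 H K hH hJ q) ⊗ₜ[R]
        ModuleCat.freeMk (f ≫ beta2 H K hK hJ q) :
      ((freeOrbitMod R G F (Ho H hH)).obj L ⊗ (freeOrbitMod R G F (Ko K hK)).obj L :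
        ModuleCat R)) := by
  simp only [theta]
  exact ModuleCat.freeDesc_apply _ _

noncomputable def sigEquiv (L : OrbitCat G F) :
    (Σ q : DoubleCoset.Quotient (H : Set G) (K : Set G), (L ⟶ Jo H K hJ q)) ≃
      ((L ⟶ Ho H hH) × (L ⟶ Ko K hK)) :=
  Equiv.ofBijective _ (Bmap_bijective H K hH hK hJ L)

noncomputable def bT (L : OrbitCat G F) :
    Module.Basis ((L ⟶ Ho H hH) × (L ⟶ Ko K hK)) R
      (((L ⟶ Ho H hH) →₀ R) ⊗[R] ((L ⟶ Ko K hK) →₀ R)) :=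
  Module.Basis.tensorProduct Finsupp.basisSingleOne Finsupp.basisSingleOne

noncomputable def lE (L : OrbitCat G F) :
    ((Σ q : DoubleCoset.Quotient (H : Set G) (K : Set G), (L ⟶ Jo H K hJ q)) →₀ R) ≃ₗ[R]
      (((L ⟶ Ho H hH) →₀ R) ⊗[R] ((L ⟶ Ko K hK) →₀ R)) :=
  Module.Basis.equiv Finsupp.basisSingleOne (bT R H K hH hK L) (sigEquiv H K hH hK hJ L)

lemma lE_single (L : OrbitCat G F)
    (x : Σ q : DoubleCoset.Quotient (H : Set G) (K : Set G), (L ⟶ Jo H K hJ q)) :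
    lE R H K hH hK hJ L (Finsupp.single x 1) =
      Finsupp.single (x.2 ≫ beta1 H K hH hJ x.1) (1 : R) ⊗ₜ[R]
        Finsupp.single (x.2 ≫ beta2 H K hK hJ x.1) (1 : R) := by
  have h1 : (Finsupp.single x 1 :
      (Σ q : DoubleCoset.Quotient (H : Set G) (K : Set G), (L ⟶ Jo H K hJ q)) →₀ R) =
      Finsupp.basisSingleOne x := by simp
  rw [lE, h1, Module.Basis.equiv_apply, bT, Module.Basis.tensorProduct_apply']
  rfl

end DCAux

namespace DCAux

open CategoryTheory MonoidalCategory Limits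
open scoped TensorProduct

variable {G : Type} [Group G] {F : Set (Subgroup G)}
variable (R : Type) [CommRing R]
variable (H K : Subgroup G) (hH : H ∈ F) (hK : K ∈ F)
  (hJ : ∀ q : DoubleCoset.Quotient (H : Set G) (K : Set G), Jsub H K q ∈ F)

noncomputable def lEIso (L : (OrbitCat G F)ᵒᵖ) :
    (ModuleCat.free R).obj
        (Σ q : DoubleCoset.Quotient (H : Set G) (K : Set G), (L.unop ⟶ Jo H K hJ q)) ≅
      (freeOrbitMod R G F (Ho H hH) ⊗ freeOrbitMod R G F (Ko K hK)).obj L :=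
  (lE R H K hH hK hJ L.unop).toModuleIso

lemma lEIso_hom_mk (L : (OrbitCat G F)ᵒᵖ)
    (x : Σ q : DoubleCoset.Quotient (H : Set G) (K : Set G), (L.unop ⟶ Jo H K hJ q)) :
    (lEIso R H K hH hK hJ L).hom (ModuleCat.freeMk x) =
      (theta R H K hH hK hJ x.1).app L (ModuleCat.freeMk x.2) := by
  rw [theta_app_mk]
  exact lE_single R H K hH hK hJ L.unop x

noncomputable def cofanIsColimit (L : (OrbitCat G F)ᵒᵖ) :
    IsColimit (Cofan.mk
      ((freeOrbitMod R G F (Ho H hH) ⊗ freeOrbitMod R G F (Ko K hK)).obj L)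
      (fun q => (theta R H K hH hK hJ q).app L)) := by
  refine mkCofanColimit _
    (fun t => (lEIso R H K hH hK hJ L).inv ≫
      ModuleCat.freeDesc (TypeCat.ofHom fun x => t.inj x.1 (ModuleCat.freeMk x.2))) ?_ ?_
  · intro t q
    apply ModuleCat.free_hom_ext
    intro f
    have e1 : (theta R H K hH hK hJ q).app L (ModuleCat.freeMk f) =
        (lE R H K hH hK hJ L.unop) (ModuleCat.freeMk
          (⟨q, f⟩ : Σ q : DoubleCoset.Quotient (H : Set G) (K : Set G), (L.unop ⟶ Jo H K hJ q))) := by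
      rw [theta_app_mk]
      exact (lE_single R H K hH hK hJ L.unop ⟨q, f⟩).symm
    show (ModuleCat.freeDesc <| TypeCat.ofHom fun x => t.inj x.1 (ModuleCat.freeMk x.2))
        ((lE R H K hH hK hJ L.unop).symm
          ((theta R H K hH hK hJ q).app L (ModuleCat.freeMk f))) =
      t.inj q (ModuleCat.freeMk f)
    rw [e1]
    exact (congrArg _ (LinearEquiv.symm_apply_apply _ _)).trans (ModuleCat.freeDesc_apply _ _)
  · intro t m w
    have hm : (lEIso R H K hH hK hJ L).hom ≫ m =
        ModuleCat.freeDesc (TypeCat.ofHom fun x => t.inj x.1 (ModuleCat.freeMk x.2)) := by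
      apply ModuleCat.free_hom_ext
      rintro ⟨q, f⟩
      have e1 : (theta R H K hH hK hJ q).app L (ModuleCat.freeMk f) =
          (lE R H K hH hK hJ L.unop) (ModuleCat.freeMk
            (⟨q, f⟩ : Σ q : DoubleCoset.Quotient (H : Set G) (K : Set G), (L.unop ⟶ Jo H K hJ q))) := by
        rw [theta_app_mk]
        exact (lE_single R H K hH hK hJ L.unop ⟨q, f⟩).symm
      show m ((lE R H K hH hK hJ L.unop) (ModuleCat.freeMk
          (⟨q, f⟩ : Σ q : DoubleCoset.Quotient (H : Set G) (K : Set G), (L.unop ⟶ Jo H K hJ q)))) =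
        (ModuleCat.freeDesc <| TypeCat.ofHom fun x => t.inj x.1 (ModuleCat.freeMk x.2)) (ModuleCat.freeMk
          (⟨q, f⟩ : Σ q : DoubleCoset.Quotient (H : Set G) (K : Set G), (L.unop ⟶ Jo H K hJ q)))
      rw [← e1]
      exact (congrArg (fun h => ModuleCat.Hom.hom h (ModuleCat.freeMk f)) (w q)).trans
        (ModuleCat.freeDesc_apply (TypeCat.ofHom fun (x : Σ q : DoubleCoset.Quotient (H : Set G) (K : Set G),
          (L.unop ⟶ Jo H K hJ q)) => t.inj x.1 (ModuleCat.freeMk x.2)) ⟨q, f⟩).symm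
    show m = (lEIso R H K hH hK hJ L).inv ≫
      ModuleCat.freeDesc (TypeCat.ofHom fun x => t.inj x.1 (ModuleCat.freeMk x.2))
    rw [← hm, Iso.inv_hom_id_assoc]

noncomputable def mainCofanIsColimit :
    IsColimit (Cofan.mk
      (freeOrbitMod R G F (Ho H hH) ⊗ freeOrbitMod R G F (Ko K hK))
      (fun q => theta R H K hH hK hJ q)) := by
  refine evaluationJointlyReflectsColimits _ (fun L => ?_)
  let w : Discrete.functor (fun q => (freeOrbitMod R G F (Jo H K hJ q)).obj L) ≅
      Discrete.functor (fun q => freeOrbitMod R G F (Jo H K hJ q)) ⋙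
        (evaluation (OrbitCat G F)ᵒᵖ (ModuleCat R)).obj L :=
    Discrete.natIso (fun q => Iso.refl _)
  exact (IsColimit.precomposeHomEquiv w _)
    (IsColimit.ofIsoColimit (cofanIsColimit R H K hH hK hJ L)
      (Cocones.ext (Iso.refl _) (by rintro ⟨q⟩; simp [w]; rfl)))

end DCAux


/-- Let `Γ = Or_F(G)` and `H, K ∈ F`.  Then there is an isomorphism
of `RΓ`-modules `R[G/H^?] ⊗ R[G/K^?] ≅ ⊕_{HgK ∈ H\G/K} R[G/(H ∩ gKg⁻¹)^?]`, where the
direct sum runs over (canonically chosen) representatives of the double cosets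
`H\G/K`. -/
theorem tensor_freeOrbitMod_iso_coprod_doubleCosets
    (G : Type) [Group G] [Finite G] (R : Type) [CommRing R]
    (F : Set (Subgroup G))
    (hconj : ∀ H ∈ F, ∀ g : G, Subgroup.map (MulAut.conj g).toMonoidHom H ∈ F)
    (hsub : ∀ H ∈ F, ∀ K : Subgroup G, K ≤ H → K ∈ F)
    (H K : Subgroup G) (hH : H ∈ F) (hK : K ∈ F) :
    Nonempty ((freeOrbitMod R G F ⟨H, hH⟩ ⊗ freeOrbitMod R G F ⟨K, hK⟩)
      ≅ ∐ fun q : DoubleCoset.Quotient (H : Set G) (K : Set G) =>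
          freeOrbitMod R G F
            ⟨H ⊓ Subgroup.map (MulAut.conj (Quotient.out q)).toMonoidHom K,
              hsub H hH _ inf_le_left⟩) := by
  refine ⟨?_⟩
  exact (DCAux.mainCofanIsColimit R H K hH hK
      (fun q => hsub H hH _ inf_le_left)).coconePointUniqueUpToIso
    (CategoryTheory.Limits.colimit.isColimit _)
end

section
/- Let G be a finite group, R a commutative ring, F a family of subgroups of G closed under conjugation and under taking subgroups and containing the trivial subgroup, and Γ = Or_F(G). For every projective RΓ-module P and every RG-module M there is an isomorphism Hom_{RΓ}(P, M^?) ≅ Hom_{RG}(P(G/1), M) of R-modules. -/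
open CategoryTheory Opposite

/-- The object `G/1` of the orbit category. -/
def botObj (G : Type) [Group G] (F : Set (Subgroup G)) (hbot : ⊥ ∈ F) : OrbitCat G F :=
  ⟨⊥, hbot⟩

/-- Right multiplication by `g` as a `G`-map `G/1 → G/1`. -/
def rmulHom (G : Type) [Group G] (F : Set (Subgroup G)) (hbot : ⊥ ∈ F) (g : G) :
    botObj G F hbot ⟶ botObj G F hbot := by
  letI : (botObj G F hbot).H.Normal := (inferInstance : (⊥ : Subgroup G).Normal)
  refine ⟨fun x => x * (QuotientGroup.mk g : G ⧸ (botObj G F hbot).H), ?_⟩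
  intro h x
  induction x using QuotientGroup.induction_on with
  | _ a => simp [MulAction.Quotient.smul_mk, ← QuotientGroup.mk_mul, mul_assoc]

lemma rmulHom_one (G : Type) [Group G] (F : Set (Subgroup G)) (hbot : ⊥ ∈ F) :
    rmulHom G F hbot 1 = 𝟙 (botObj G F hbot) := by
  letI : (botObj G F hbot).H.Normal := (inferInstance : (⊥ : Subgroup G).Normal)
  apply Subtype.ext
  funext x
  show x * (QuotientGroup.mk 1 : G ⧸ (botObj G F hbot).H) = x
  rw [QuotientGroup.mk_one, mul_one]

lemma rmulHom_comp (G : Type) [Group G] (F : Set (Subgroup G)) (hbot : ⊥ ∈ F) (g₁ g₂ : G) :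
    rmulHom G F hbot g₁ ≫ rmulHom G F hbot g₂ = rmulHom G F hbot (g₁ * g₂) := by
  letI : (botObj G F hbot).H.Normal := (inferInstance : (⊥ : Subgroup G).Normal)
  apply Subtype.ext
  funext x
  show x * QuotientGroup.mk g₁ * QuotientGroup.mk g₂
      = x * (QuotientGroup.mk (g₁ * g₂) : G ⧸ (botObj G F hbot).H)
  rw [QuotientGroup.mk_mul, mul_assoc]

/-- Evaluation of an `RΓ`-module at the object `G/1`, as an `RG`-module: the group `G`
acts via the right-multiplication automorphisms of `G/1`. -/
noncomputable def evalOne (R : Type) [CommRing R] (G : Type) [Group G]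
    (F : Set (Subgroup G)) (hbot : ⊥ ∈ F) : OrbitModule R G F ⥤ Rep R G where
  obj N := Rep.of
    { toFun := fun g => ((N.map (rmulHom G F hbot g).op).hom :
        N.obj (op (botObj G F hbot)) →ₗ[R] N.obj (op (botObj G F hbot)))
      map_one' := by
        show (N.map (rmulHom G F hbot 1).op).hom = _
        rw [rmulHom_one]
        show (N.map (𝟙 _)).hom = _
        rw [N.map_id]
        rfl
      map_mul' := fun g₁ g₂ => by
        have h : N.map (rmulHom G F hbot (g₁ * g₂)).op
            = N.map (rmulHom G F hbot g₂).op ≫ N.map (rmulHom G F hbot g₁).op := by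
          rw [← N.map_comp, ← op_comp, rmulHom_comp]
        show ((N.map (rmulHom G F hbot (g₁ * g₂)).op).hom :
            N.obj (op (botObj G F hbot)) →ₗ[R] N.obj (op (botObj G F hbot))) = _
        rw [h]
        rfl }
  map {N N'} α :=
    Rep.ofHom
      { toLinearMap := (α.app (op (botObj G F hbot))).hom
        isIntertwining' := fun g =>
          congrArg ModuleCat.Hom.hom (α.naturality (rmulHom G F hbot g).op) }
  map_id N := rfl
  map_comp α β := rfl


section Aux

variable {G : Type} [Group G] {R : Type} [CommRing R] {F : Set (Subgroup G)}

/-- The `G`-map `G/1 → G/H` sending the coset of `1` to `c`. -/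
def prjHom (hbot : ⊥ ∈ F) (X : OrbitCat G F) (c : G ⧸ X.H) :
    botObj G F hbot ⟶ X := by
  refine ⟨fun x => Quotient.liftOn' x (fun g => g • c) (fun a b hab => ?_), ?_⟩
  · have h : a⁻¹ * b ∈ (⊥ : Subgroup G) := QuotientGroup.leftRel_apply.mp hab
    simp only [Subgroup.mem_bot] at h
    rw [inv_mul_eq_one.mp h]
  · intro g x
    induction x using QuotientGroup.induction_on with
    | _ a =>
      show Quotient.liftOn' (g • (QuotientGroup.mk a : G ⧸ (botObj G F hbot).H)) _ _ = _
      rw [MulAction.Quotient.smul_mk]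
      show (g * a) • c = g • (a • c)
      rw [mul_smul]

lemma prjHom_apply_mk (hbot : ⊥ ∈ F) (X : OrbitCat G F) (c : G ⧸ X.H) (g : G) :
    (prjHom hbot X c).1 (QuotientGroup.mk g) = g • c := rfl

lemma prjHom_one (hbot : ⊥ ∈ F) :
    prjHom hbot (botObj G F hbot) (QuotientGroup.mk 1) = 𝟙 (botObj G F hbot) := by
  apply Subtype.ext
  funext x
  induction x using QuotientGroup.induction_on with
  | _ a =>
    show a • (QuotientGroup.mk (1 : G) : G ⧸ (botObj G F hbot).H) = QuotientGroup.mk a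
    rw [MulAction.Quotient.smul_mk, smul_eq_mul, mul_one]

lemma rmulHom_comp_prjHom (hbot : ⊥ ∈ F) (X : OrbitCat G F) (c : G ⧸ X.H) (g : G) :
    rmulHom G F hbot g ≫ prjHom hbot X c = prjHom hbot X (g • c) := by
  apply Subtype.ext
  funext x
  induction x using QuotientGroup.induction_on with
  | _ a =>
    letI : (botObj G F hbot).H.Normal := (inferInstance : (⊥ : Subgroup G).Normal)
    show (prjHom hbot X c).1 (QuotientGroup.mk a * QuotientGroup.mk g) = a • (g • c)
    rw [← QuotientGroup.mk_mul, prjHom_apply_mk, mul_smul]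

lemma prjHom_comp (hbot : ⊥ ∈ F) {X Y : OrbitCat G F} (c : G ⧸ X.H) (u : X ⟶ Y) :
    prjHom hbot X c ≫ u = prjHom hbot Y (u.1 c) := by
  apply Subtype.ext
  funext x
  induction x using QuotientGroup.induction_on with
  | _ a =>
    show u.1 (a • c) = a • u.1 c
    exact u.2 a c

end Aux


section Main

variable {G : Type} [Group G] {R : Type} [CommRing R] {F : Set (Subgroup G)}
  (hbot : ⊥ ∈ F) (P : OrbitModule R G F) (M : Rep R G)

lemma repHom_add_apply {A : Rep R G} (h₁ h₂ : A ⟶ M) (x : A) :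
    (h₁ + h₂).hom x = h₁.hom x + h₂.hom x := by rw [Rep.add_hom]; rfl

lemma repHom_smul_apply {A : Rep R G} (r : R) (h : A ⟶ M) (x : A) :
    (r • h).hom x = r • h.hom x := by rw [Rep.smul_hom]; rfl

/-- The underlying linear map `R[G/H] → M` attached to `f : P(G/1) ⟶ M` and `p ∈ P(G/H)`. -/
noncomputable def psiLin (f : (evalOne R G F hbot).obj P ⟶ M) (X : (OrbitCat G F)ᵒᵖ)
    (p : P.obj X) : ((linOrbit R G F).obj X.unop).V →ₗ[R] M.V :=
  Finsupp.lift M R (G ⧸ X.unop.H)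
    (fun c => f.hom (P.map (prjHom hbot X.unop c).op p)) ∘ₗ
    (MonoidAlgebra.coeffLinearEquiv R).toLinearMap

lemma psiLin_single (f : (evalOne R G F hbot).obj P ⟶ M) (X : (OrbitCat G F)ᵒᵖ)
    (p : P.obj X) (c : G ⧸ X.unop.H) :
    psiLin hbot P M f X p (MonoidAlgebra.single c 1)
      = f.hom (P.map (prjHom hbot X.unop c).op p) := by
  show Finsupp.lift M R (G ⧸ X.unop.H) _
    (MonoidAlgebra.coeffLinearEquiv R (MonoidAlgebra.single c (1 : R))) = _
  simp [Finsupp.sum_single_index]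

lemma psiLin_comm (f : (evalOne R G F hbot).obj P ⟶ M) (X : (OrbitCat G F)ᵒᵖ)
    (p : P.obj X) (g : G) :
    psiLin hbot P M f X p ∘ₗ ((linOrbit R G F).obj X.unop).ρ g
      = M.ρ g ∘ₗ psiLin hbot P M f X p := by
  refine MonoidAlgebra.lhom_ext' fun (c : G ⧸ X.unop.H) => LinearMap.ext_ring ?_
  show psiLin hbot P M f X p ((((linOrbit R G F).obj X.unop).ρ g) (MonoidAlgebra.single c 1))
    = M.ρ g (psiLin hbot P M f X p (MonoidAlgebra.single c 1))
  have e1 : (((linOrbit R G F).obj X.unop).ρ g) (MonoidAlgebra.single c (1 : R))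
      = MonoidAlgebra.single (g • c) 1 :=
    Representation.linearize_single (X := (orbitToAction G F).obj X.unop) g c
  erw [e1, psiLin_single, psiLin_single]
  have h1 : P.map (prjHom hbot X.unop (g • c)).op
      = P.map (prjHom hbot X.unop c).op ≫ P.map (rmulHom G F hbot g).op := by
    rw [← P.map_comp, ← op_comp, rmulHom_comp_prjHom]
  rw [h1]
  exact Rep.hom_comm_apply f g ((P.map (prjHom hbot X.unop c).op) p)

/-- The underlying `Rep` hom `R[G/H] ⟶ M` attached to `f : P(G/1) ⟶ M` and `p ∈ P(G/H)`. -/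
noncomputable def psiHom (f : (evalOne R G F hbot).obj P ⟶ M) (X : (OrbitCat G F)ᵒᵖ)
    (p : P.obj X) : (linOrbit R G F).obj X.unop ⟶ M :=
  ConcreteCategory.ofHom (C := Rep R G)
    ⟨psiLin hbot P M f X p, fun g => psiLin_comm hbot P M f X p g⟩

lemma psiHom_single (f : (evalOne R G F hbot).obj P ⟶ M) (X : (OrbitCat G F)ᵒᵖ)
    (p : P.obj X) (c : G ⧸ X.unop.H) :
    (psiHom hbot P M f X p).hom (MonoidAlgebra.single c 1)
      = f.hom (P.map (prjHom hbot X.unop c).op p) :=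
  psiLin_single hbot P M f X p c

/-- The natural transformation `P ⟶ M^?` attached to `f : P(G/1) ⟶ M`. -/
noncomputable def psi (f : (evalOne R G F hbot).obj P ⟶ M) :
    P ⟶ fixedPointsMod R G F M where
  app X := ModuleCat.ofHom
    { toFun := psiHom hbot P M f X
      map_add' := fun p q => by
        refine Rep.hom_ext (Representation.IntertwiningMap.ext
          (MonoidAlgebra.lhom_ext' fun (c : G ⧸ X.unop.H) => LinearMap.ext_ring ?_))
        show (psiHom hbot P M f X (p + q)).hom (MonoidAlgebra.single c 1)
          = (psiHom hbot P M f X p + psiHom hbot P M f X q).hom (MonoidAlgebra.single c 1)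
        erw [repHom_add_apply, psiHom_single, psiHom_single, psiHom_single, map_add, map_add]
      map_smul' := fun r p => by
        refine Rep.hom_ext (Representation.IntertwiningMap.ext
          (MonoidAlgebra.lhom_ext' fun (c : G ⧸ X.unop.H) => LinearMap.ext_ring ?_))
        show (psiHom hbot P M f X (r • p)).hom (MonoidAlgebra.single c 1)
          = (r • psiHom hbot P M f X p).hom (MonoidAlgebra.single c 1)
        erw [repHom_smul_apply, psiHom_single, psiHom_single, map_smul, map_smul] }
  naturality := fun X Y u => by
    refine ModuleCat.hom_ext (LinearMap.ext fun p => ?_)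
    refine Rep.hom_ext (Representation.IntertwiningMap.ext
      (MonoidAlgebra.lhom_ext' fun (c : G ⧸ Y.unop.H) => LinearMap.ext_ring ?_))
    show (psiHom hbot P M f Y (P.map u p)).hom (MonoidAlgebra.single c 1)
      = ((linOrbit R G F).map u.unop ≫ psiHom hbot P M f X p).hom (MonoidAlgebra.single c 1)
    rw [psiHom_single]
    show f.hom (P.map (prjHom hbot Y.unop c).op (P.map u p))
      = (psiHom hbot P M f X p).hom
          (((linOrbit R G F).map u.unop).hom (MonoidAlgebra.single c 1))
    have e1 : ((linOrbit R G F).map u.unop).hom (MonoidAlgebra.single c (1 : R))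
        = MonoidAlgebra.single (u.unop.1 c) 1 :=
      Representation.linearizeMap_single ((orbitToAction G F).map u.unop) c 1
    erw [e1, psiHom_single]
    have h1 : P.map (prjHom hbot X.unop (u.unop.1 c)).op
        = P.map u ≫ P.map (prjHom hbot Y.unop c).op := by
      rw [← prjHom_comp hbot c u.unop, op_comp, P.map_comp, u.op_unop]
    rw [h1]
    rfl

/-- The underlying linear map `P(G/1) → M` attached to `α : P ⟶ M^?`. -/
noncomputable def phiLin (α : P ⟶ fixedPointsMod R G F M) :
    ((evalOne R G F hbot).obj P).V →ₗ[R] M.V where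
  toFun := fun p => (α.app (op (botObj G F hbot)) p).hom
    (MonoidAlgebra.single (QuotientGroup.mk 1) 1)
  map_add' := fun p q => by
    show (α.app (op (botObj G F hbot)) (p + q)).hom _ = _
    erw [map_add, repHom_add_apply]
  map_smul' := fun r p => by
    show (α.app (op (botObj G F hbot)) (r • p)).hom _ = _
    erw [map_smul, repHom_smul_apply]
    rfl

lemma phiLin_comm (α : P ⟶ fixedPointsMod R G F M) (g : G) :
    phiLin hbot P M α ∘ₗ ((evalOne R G F hbot).obj P).ρ g
      = M.ρ g ∘ₗ phiLin hbot P M α := by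
  refine LinearMap.ext fun p => ?_
  show (α.app (op (botObj G F hbot)) (P.map (rmulHom G F hbot g).op p)).hom
      (MonoidAlgebra.single (QuotientGroup.mk 1) 1)
    = M.ρ g ((α.app (op (botObj G F hbot)) p).hom (MonoidAlgebra.single (QuotientGroup.mk 1) 1))
  have h1 : α.app (op (botObj G F hbot)) (P.map (rmulHom G F hbot g).op p)
      = (fixedPointsMod R G F M).map (rmulHom G F hbot g).op
          (α.app (op (botObj G F hbot)) p) :=
    congr($(α.naturality (rmulHom G F hbot g).op) p)
  rw [h1]
  show (α.app (op (botObj G F hbot)) p).hom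
      (((linOrbit R G F).map (rmulHom G F hbot g)).hom
        (MonoidAlgebra.single (QuotientGroup.mk 1) 1)) = _
  have e1 : ((linOrbit R G F).map (rmulHom G F hbot g)).hom
      (MonoidAlgebra.single (QuotientGroup.mk 1) (1 : R))
      = MonoidAlgebra.single ((rmulHom G F hbot g).1 (QuotientGroup.mk 1)) 1 :=
    Representation.linearizeMap_single ((orbitToAction G F).map (rmulHom G F hbot g)) _ 1
  rw [e1]
  have h2 : (rmulHom G F hbot g).1 (QuotientGroup.mk 1)
      = g • (QuotientGroup.mk 1 : G ⧸ (botObj G F hbot).H) := by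
    letI : (botObj G F hbot).H.Normal := (inferInstance : (⊥ : Subgroup G).Normal)
    show QuotientGroup.mk 1 * QuotientGroup.mk g = _
    rw [← QuotientGroup.mk_mul, one_mul, MulAction.Quotient.smul_mk, smul_eq_mul, mul_one]
  have e2 : MonoidAlgebra.single ((rmulHom G F hbot g).1 (QuotientGroup.mk 1)) (1 : R)
      = ((linOrbit R G F).obj (botObj G F hbot)).ρ g
          (MonoidAlgebra.single (QuotientGroup.mk 1) 1) := by
    rw [h2]
    exact (Representation.linearize_single (k := R)
      (X := (orbitToAction G F).obj (botObj G F hbot)) g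
      (QuotientGroup.mk 1 : G ⧸ (botObj G F hbot).H)).symm
  rw [e2]
  exact Rep.hom_comm_apply (α.app (op (botObj G F hbot)) p) g
    (MonoidAlgebra.single (QuotientGroup.mk 1) 1)

/-- The `Rep` hom `P(G/1) ⟶ M` attached to a natural transformation `P ⟶ M^?`. -/
noncomputable def phi (α : P ⟶ fixedPointsMod R G F M) :
    (evalOne R G F hbot).obj P ⟶ M :=
  ConcreteCategory.ofHom (C := Rep R G)
    ⟨phiLin hbot P M α, fun g => phiLin_comm hbot P M α g⟩

end Main

/-- Let `F` be a family of subgroups of a finite group `G` closed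
under conjugation and under taking subgroups and containing the trivial subgroup, and
`Γ = Or_F(G)`.  For every projective `RΓ`-module `P` and every `RG`-module `M` there is
an isomorphism of `R`-modules `Hom_{RΓ}(P, M^?) ≅ Hom_{RG}(P(G/1), M)`, where `P(G/1)`
is the evaluation of `P` at `G/1` with its natural `G`-action. -/
theorem homFixedPointsMod_iso_homEvalOne
    (G : Type) [Group G] [Finite G] (R : Type) [CommRing R]
    (F : Set (Subgroup G))
    (hconj : ∀ H ∈ F, ∀ g : G, Subgroup.map (MulAut.conj g).toMonoidHom H ∈ F)
    (hsub : ∀ H ∈ F, ∀ K : Subgroup G, K ≤ H → K ∈ F)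
    (hbot : ⊥ ∈ F)
    (P : OrbitModule R G F) (hP : Projective P) (M : Rep R G) :
    Nonempty ((P ⟶ fixedPointsMod R G F M) ≃ₗ[R] ((evalOne R G F hbot).obj P ⟶ M)) := by
  refine ⟨{ toFun := phi hbot P M
            invFun := psi hbot P M
            map_add' := ?_
            map_smul' := ?_
            left_inv := ?_
            right_inv := ?_ }⟩
  · intro α β
    refine Rep.hom_ext (Representation.IntertwiningMap.ext (LinearMap.ext fun p => ?_))
    show (((α + β).app (op (botObj G F hbot))) p).hom _ = _
    rw [NatTrans.app_add]
    show (((α.app (op (botObj G F hbot)) + β.app (op (botObj G F hbot)))) p).hom _ = _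
    rfl
  · intro r α
    refine Rep.hom_ext (Representation.IntertwiningMap.ext (LinearMap.ext fun p => ?_))
    show (((r • α).app (op (botObj G F hbot))) p).hom _ = _
    rw [NatTrans.app_smul]
    show (((r • α.app (op (botObj G F hbot)))) p).hom _ = _
    rfl
  · intro α
    apply NatTrans.ext
    funext X
    refine ModuleCat.hom_ext (LinearMap.ext fun p => ?_)
    refine Rep.hom_ext (Representation.IntertwiningMap.ext
      (MonoidAlgebra.lhom_ext' fun (c : G ⧸ X.unop.H) => LinearMap.ext_ring ?_))
    show (psiHom hbot P M (phi hbot P M α) X p).hom (MonoidAlgebra.single c 1)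
      = (α.app X p).hom (MonoidAlgebra.single c 1)
    erw [psiHom_single]
    show (α.app (op (botObj G F hbot)) (P.map (prjHom hbot X.unop c).op p)).hom
        (MonoidAlgebra.single (QuotientGroup.mk 1) 1) = _
    have h1 : α.app (op (botObj G F hbot)) (P.map (prjHom hbot X.unop c).op p)
        = (fixedPointsMod R G F M).map (prjHom hbot X.unop c).op (α.app X p) :=
      congr($(α.naturality (prjHom hbot X.unop c).op) p)
    rw [h1]
    show ((linOrbit R G F).map (prjHom hbot X.unop c) ≫ α.app X p).hom
        (MonoidAlgebra.single (QuotientGroup.mk 1) 1) = _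
    rw [show ((linOrbit R G F).map (prjHom hbot X.unop c) ≫ α.app X p).hom
        (MonoidAlgebra.single (QuotientGroup.mk 1) 1)
      = (α.app X p).hom (MonoidAlgebra.single ((prjHom hbot X.unop c).1 (QuotientGroup.mk 1)) 1)
      from congrArg _ (Representation.linearizeMap_single _ _ 1)]
    rw [show (prjHom hbot X.unop c).1 (QuotientGroup.mk 1) = c by
      rw [prjHom_apply_mk, one_smul]]
  · intro f
    refine Rep.hom_ext (Representation.IntertwiningMap.ext (LinearMap.ext fun p => ?_))
    show (psiHom hbot P M f (op (botObj G F hbot)) p).hom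
        (MonoidAlgebra.single (QuotientGroup.mk 1) 1) = f.hom p
    erw [psiHom_single]
    rw [show (prjHom hbot (botObj G F hbot) (QuotientGroup.mk 1)) = 𝟙 _ from prjHom_one hbot]
    rw [op_id, P.map_id]
    rfl
end

section
/- Let G = Z/2 × Z/2, let F = {1, H_1, H_2, H_3} be the family of proper subgroups of G, let R = F_2 and Γ = Or_F(G). Let R_0 denote the RΓ-module with value R at G/1 and value 0 at G/H_i for i = 1, 2, 3. Then for every n ≥ 0 there is an isomorphism Ext^n_{RΓ}(R_0, R̲) ≅ H^n(G, R) with the ordinary group cohomology of G with coefficients in the trivial module R. -/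
open CategoryTheory Opposite

/-- If there is a morphism `G/H → G/K` in the orbit category, then `H` is subconjugate
to `K`. -/
lemma OrbitCat.exists_conj_le_of_hom {G : Type} [Group G] {F : Set (Subgroup G)}
    {X Y : OrbitCat G F} (f : X ⟶ Y) :
    ∃ g : G, ∀ h ∈ X.H, g⁻¹ * h * g ∈ Y.H := by
  obtain ⟨g, hg⟩ := QuotientGroup.mk_surjective (f.1 (QuotientGroup.mk 1))
  refine ⟨g, fun h hh => ?_⟩
  have h1 : (h • (QuotientGroup.mk 1 : G ⧸ X.H)) = QuotientGroup.mk 1 := by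
    rw [MulAction.Quotient.smul_mk]
    exact (QuotientGroup.eq).2 (by simpa using hh)
  have h2 := f.2 h (QuotientGroup.mk 1)
  rw [h1, ← hg, MulAction.Quotient.smul_mk] at h2
  have h3 := (QuotientGroup.eq).1 h2
  simpa [mul_assoc] using h3

/-- In the orbit category of an abelian group, existence of a morphism `G/H → G/K`
forces `H ≤ K`. -/
lemma OrbitCat.le_of_hom {G : Type} [CommGroup G] {F : Set (Subgroup G)}
    {X Y : OrbitCat G F} (f : X ⟶ Y) : X.H ≤ Y.H := by
  intro h hh
  obtain ⟨g, hg⟩ := OrbitCat.exists_conj_le_of_hom f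
  have e : g⁻¹ * h * g = h := by
    rw [mul_comm g⁻¹ h, mul_assoc, inv_mul_cancel, mul_one]
  simpa [e] using hg h hh

/-- A subgroup contained in the cyclic subgroup generated by an element of square one
is trivial or the whole cyclic subgroup. -/
lemma le_zpowers_sq_one {G : Type} [CommGroup G] {c : G} (hc : c * c = 1)
    {y : Subgroup G} (hy : y ≤ Subgroup.zpowers c) :
    y = ⊥ ∨ y = Subgroup.zpowers c := by
  rcases y.bot_or_exists_ne_one with h | ⟨x, hx, hx1⟩
  · exact Or.inl h
  · right
    have hsq : ∀ m : ℤ, c ^ (m + m) = 1 := by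
      intro m
      rw [zpow_add, ← mul_zpow, hc, one_zpow]
    have hxc : x = c := by
      obtain ⟨k, hk⟩ := Subgroup.mem_zpowers_iff.1 (hy hx)
      rcases Int.even_or_odd k with ⟨m, hm⟩ | ⟨m, hm⟩
      · exact absurd (by rw [← hk, hm, hsq]) hx1
      · rw [← hk, hm, zpow_add, two_mul, hsq, one_mul, zpow_one]
    exact le_antisymm hy (Subgroup.zpowers_le.2 (hxc ▸ hx))
/-- The Klein four group `G = Z/2 × Z/2`. -/
abbrev K4 : Type := Multiplicative (ZMod 2) × Multiplicative (ZMod 2)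

/-- The first generator of `K4`. -/
def k4a : K4 := (Multiplicative.ofAdd 1, 1)

/-- The second generator of `K4`. -/
def k4b : K4 := (1, Multiplicative.ofAdd 1)

/-- The three subgroups of order 2 of the Klein four group:
`H_1 = ⟨a₁⟩`, `H_2 = ⟨a₁a₂⟩` and `H_3 = ⟨a₂⟩`. -/
def k4H : Fin 3 → Subgroup K4 :=
  ![Subgroup.zpowers k4a, Subgroup.zpowers (k4a * k4b), Subgroup.zpowers k4b]

/-- The family `F = {1, H_1, H_2, H_3}` of all proper (equivalently, cyclic) subgroups
of the Klein four group. -/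
def k4F : Set (Subgroup K4) := {H | H ≠ ⊤}

lemma k4_gen_sq (i : Fin 3) : ∃ c : K4, k4H i = Subgroup.zpowers c ∧ c * c = 1 := by
  fin_cases i
  · exact ⟨k4a, rfl, by decide⟩
  · exact ⟨k4a * k4b, rfl, by decide⟩
  · exact ⟨k4b, rfl, by decide⟩

/-- Closure property needed to define the `RΓ`-module `R_0`. -/
lemma k4_hS_bot : ∀ {X Y : (OrbitCat K4 k4F)ᵒᵖ}, (X ⟶ Y) →
    X.unop.H ∈ ({⊥} : Set (Subgroup K4)) → Y.unop.H ∈ ({⊥} : Set (Subgroup K4)) := by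
  intro X Y f hx
  have hle := OrbitCat.le_of_hom f.unop
  simp only [Set.mem_singleton_iff] at hx ⊢
  exact le_bot_iff.1 (hx ▸ hle)

/-- Closure property needed to define the `RΓ`-module `R_{H_i}`. -/
lemma k4_hS_H (i : Fin 3) : ∀ {X Y : (OrbitCat K4 k4F)ᵒᵖ}, (X ⟶ Y) →
    X.unop.H ∈ ({⊥, k4H i} : Set (Subgroup K4)) →
    Y.unop.H ∈ ({⊥, k4H i} : Set (Subgroup K4)) := by
  intro X Y f hx
  have hle := OrbitCat.le_of_hom f.unop
  obtain ⟨c, hci, hc⟩ := k4_gen_sq i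
  simp only [Set.mem_insert_iff, Set.mem_singleton_iff] at hx ⊢
  rcases hx with hx | hx
  · exact Or.inl (le_bot_iff.1 (hx ▸ hle))
  · have hy : Y.unop.H ≤ Subgroup.zpowers c := by
      rw [← hci, ← hx]; exact hle
    rcases le_zpowers_sq_one hc hy with h | h
    · exact Or.inl h
    · exact Or.inr (by rw [h, hci])
open scoped Classical in
/-- The `RΓ`-module with value `R` at the objects `G/H` with `H ∈ S` and value `0`
elsewhere, all structure maps between nonzero values being the identity of `R`. -/
noncomputable def suppMod (R : Type) [CommRing R] {G : Type} [Group G] {F : Set (Subgroup G)}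
    (S : Set (Subgroup G))
    (hS : ∀ {X Y : (OrbitCat G F)ᵒᵖ}, (X ⟶ Y) → X.unop.H ∈ S → Y.unop.H ∈ S) :
    OrbitModule R G F where
  obj X := ModuleCat.of R (PLift (X.unop.H ∈ S) → R)
  map {X Y} f := ModuleCat.ofHom
    { toFun := fun c _ => if hx : X.unop.H ∈ S then c ⟨hx⟩ else 0
      map_add' := fun c d => by
        funext hy
        by_cases hx : X.unop.H ∈ S <;> simp [hx]
      map_smul' := fun r c => by
        funext hy
        by_cases hx : X.unop.H ∈ S <;> simp [hx] }
  map_id X := by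
    apply ModuleCat.hom_ext; apply LinearMap.ext; intro c
    funext hy
    exact dif_pos hy.down
  map_comp {X Z Y} f g := by
    apply ModuleCat.hom_ext; apply LinearMap.ext; intro c
    funext hy
    show (if hx : (unop X).H ∈ S then c ⟨hx⟩ else 0)
        = (if hz : (unop Z).H ∈ S then (if hx : (unop X).H ∈ S then c ⟨hx⟩ else 0) else 0)
    by_cases hx : (unop X).H ∈ S
    · rw [dif_pos hx, dif_pos (hS f hx)]
    · rw [dif_neg hx]
      by_cases hz : (unop Z).H ∈ S <;> simp [hz]

open scoped Classical in
/-- For `S ⊆ T`, the map of `RΓ`-modules `suppMod S → suppMod T` which is the identity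
at the objects `G/H` with `H ∈ S` and zero elsewhere. -/
noncomputable def suppModMap (R : Type) [CommRing R] {G : Type} [Group G]
    {F : Set (Subgroup G)} (S T : Set (Subgroup G))
    (hS : ∀ {X Y : (OrbitCat G F)ᵒᵖ}, (X ⟶ Y) → X.unop.H ∈ S → Y.unop.H ∈ S)
    (hT : ∀ {X Y : (OrbitCat G F)ᵒᵖ}, (X ⟶ Y) → X.unop.H ∈ T → Y.unop.H ∈ T)
    (hST : S ⊆ T) :
    suppMod R S hS ⟶ suppMod R T hT where
  app X := ModuleCat.ofHom
    { toFun := fun c _ => if hx : X.unop.H ∈ S then c ⟨hx⟩ else 0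
      map_add' := fun c d => by
        funext hy
        by_cases hx : X.unop.H ∈ S <;> simp [hx]
      map_smul' := fun r c => by
        funext hy
        by_cases hx : X.unop.H ∈ S <;> simp [hx] }
  naturality {X Y} f := by
    apply ModuleCat.hom_ext; apply LinearMap.ext; intro c
    funext hy
    show (if hyS : (unop Y).H ∈ S then (if hx : (unop X).H ∈ S then c ⟨hx⟩ else 0) else 0)
        = (if hxT : (unop X).H ∈ T then (if hx : (unop X).H ∈ S then c ⟨hx⟩ else 0) else 0)
    by_cases hx : (unop X).H ∈ S
    · rw [dif_pos (hS f hx), dif_pos (hST hx), dif_pos hx]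
    · rw [dif_neg hx]
      by_cases hyS : (unop Y).H ∈ S <;> by_cases hxT : (unop X).H ∈ T <;> simp [hyS, hxT]

/-- The `RΓ`-module `R_0` with value `F_2` at `G/1` and value `0` at `G/H_i`. -/
noncomputable def r0Mod : OrbitModule (ZMod 2) K4 k4F :=
  suppMod (ZMod 2) {⊥} k4_hS_bot

/-- The `RΓ`-module `R_{H_i}` with value `F_2` at `G/1` and `G/H_i` (with identity
structure map between them) and value `0` at the other two subgroups of order 2. -/
noncomputable def rHMod (i : Fin 3) : OrbitModule (ZMod 2) K4 k4F :=
  suppMod (ZMod 2) {⊥, k4H i} (k4_hS_H i)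
universe uC vC

/-- The cochain complex of `R`-modules `Hom_C(P_*, N)` associated to a chain complex
`P_*` in an `R`-linear category `C`; when `P_*` is a projective resolution of `M`, its
`n`-th cohomology is `Ext^n_C(M, N)`. -/
noncomputable def homCochain (R : Type) [CommRing R] {C : Type uC}
    [CategoryTheory.Category.{vC} C]
    [CategoryTheory.Preadditive C] [CategoryTheory.Linear R C]
    (P : ChainComplex C ℕ) (N : C) : CochainComplex (ModuleCat R) ℕ :=
  CochainComplex.of (fun n => ((CategoryTheory.linearYoneda R C).obj N).obj
      (Opposite.op (P.X n)))
    (fun n => ((CategoryTheory.linearYoneda R C).obj N).map (P.d (n + 1) n).op)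
    (fun n => by
      rw [← CategoryTheory.Functor.map_comp, ← CategoryTheory.op_comp,
        HomologicalComplex.d_comp_d,
        show (0 : P.X (n + 1 + 1) ⟶ P.X n).op = 0 from rfl,
        CategoryTheory.Functor.map_zero])

lemma homCochain_d_succ (R : Type) [CommRing R] {C : Type uC}
    [CategoryTheory.Category.{vC} C]
    [CategoryTheory.Preadditive C] [CategoryTheory.Linear R C]
    (P : ChainComplex C ℕ) (N : C) (n : ℕ) :
    (homCochain R P N).d n (n + 1) = ((CategoryTheory.linearYoneda R C).obj N).map (P.d (n + 1) n).op :=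
  CochainComplex.of_d (fun n => ((CategoryTheory.linearYoneda R C).obj N).obj (Opposite.op (P.X n)))
    (fun n => ((CategoryTheory.linearYoneda R C).obj N).map (P.d (n + 1) n).op) n

/-! ### Auxiliary development: the object `G/1` of the orbit category -/

section OrbitAux

variable {G : Type} [Group G] {F : Set (Subgroup G)}

variable (F) in
/-- The object `G/1` of the orbit category. -/
def botOrbit (hF : (⊥ : Subgroup G) ∈ F) : OrbitCat G F := ⟨⊥, hF⟩

variable {hF : (⊥ : Subgroup G) ∈ F}

/-- Extract the group element underlying a point of `G/1`. -/
noncomputable def botG (hF : (⊥ : Subgroup G) ∈ F) (t : G ⧸ (botOrbit F hF).H) : G :=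
  QuotientGroup.quotientBot t

@[simp] lemma botG_mk (g : G) : botG hF (QuotientGroup.mk g) = g := rfl

@[simp] lemma mk_botG (t : G ⧸ (botOrbit F hF).H) : QuotientGroup.mk (botG hF t) = t := by
  obtain ⟨g, rfl⟩ := QuotientGroup.mk_surjective t
  rfl

lemma botG_smul (g : G) (t : G ⧸ (botOrbit F hF).H) : botG hF (g • t) = g * botG hF t := by
  obtain ⟨x, rfl⟩ := QuotientGroup.mk_surjective t
  rw [MulAction.Quotient.smul_mk, botG_mk, smul_eq_mul, botG_mk]

/-- Morphism extensionality in the orbit category. -/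
lemma OrbitCat.hom_ext {X Y : OrbitCat G F} {f g : X ⟶ Y} (h : f.1 = g.1) : f = g :=
  Subtype.ext h

lemma OrbitCat.hom_bot {X Y : OrbitCat G F} (f : X ⟶ Y) (hY : Y.H = ⊥) : X.H = ⊥ := by
  obtain ⟨g, hg⟩ := OrbitCat.exists_conj_le_of_hom f
  rw [eq_bot_iff]
  intro h hh
  have h1 := hg h hh
  rw [hY, Subgroup.mem_bot] at h1
  have : h = 1 := by
    have := congrArg (fun x => g * x * g⁻¹) h1
    simpa [mul_assoc] using this
  simp [this]

lemma OrbitCat.eq_botOrbit (X : OrbitCat G F) (hX : X.H = ⊥) : X = botOrbit F hF := by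
  cases X
  cases hX
  rfl

/-- The endomorphism of `G/1` given by right multiplication with `g`. -/
noncomputable def eHom (hF : (⊥ : Subgroup G) ∈ F) (g : G) :
    botOrbit F hF ⟶ botOrbit F hF :=
  ⟨fun t => QuotientGroup.mk (botG hF t * g), fun a t => by
    obtain ⟨x, rfl⟩ := QuotientGroup.mk_surjective t
    show QuotientGroup.mk (botG hF (a • QuotientGroup.mk x) * g)
      = a • QuotientGroup.mk (botG hF (QuotientGroup.mk x) * g)
    rw [botG_smul, botG_mk, MulAction.Quotient.smul_mk, smul_eq_mul, mul_assoc]⟩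

@[simp] lemma eHom_apply (g x : G) :
    (eHom hF g).1 (QuotientGroup.mk x) = QuotientGroup.mk (x * g) := by
  show QuotientGroup.mk (botG hF (QuotientGroup.mk x) * g) = _
  rw [botG_mk]

lemma eHom_comp (g h : G) : eHom hF g ≫ eHom hF h = eHom hF (g * h) := by
  apply OrbitCat.hom_ext
  funext t
  obtain ⟨x, rfl⟩ := QuotientGroup.mk_surjective t
  show (eHom hF h).1 ((eHom hF g).1 (QuotientGroup.mk x)) = (eHom hF (g*h)).1 (QuotientGroup.mk x)
  rw [eHom_apply, eHom_apply, eHom_apply, mul_assoc]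

@[simp] lemma eHom_one : eHom hF (1 : G) = 𝟙 (botOrbit F hF) := by
  apply OrbitCat.hom_ext
  funext t
  obtain ⟨x, rfl⟩ := QuotientGroup.mk_surjective t
  show (eHom hF 1).1 (QuotientGroup.mk x) = QuotientGroup.mk x
  rw [eHom_apply, mul_one]

/-- The canonical morphism `G/H → G/1` when `H = ⊥`. -/
noncomputable def uHom (X : OrbitCat G F) (hX : X.H = ⊥) : X ⟶ botOrbit F hF :=
  ⟨fun t => Quotient.liftOn' t (fun g => QuotientGroup.mk g)
    (fun a b hab => by
      rw [QuotientGroup.leftRel_apply, hX, Subgroup.mem_bot] at hab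
      have hba : b = a := by
        have := congrArg (fun x => a * x) hab
        simpa [mul_assoc] using this
      rw [hba]),
   fun a t => by
    obtain ⟨x, rfl⟩ := QuotientGroup.mk_surjective t
    rw [MulAction.Quotient.smul_mk]
    show QuotientGroup.mk (a • x) = a • QuotientGroup.mk x
    rw [MulAction.Quotient.smul_mk]⟩

@[simp] lemma uHom_mk (X : OrbitCat G F) (hX : X.H = ⊥) (g : G) :
    (uHom (hF := hF) X hX).1 (QuotientGroup.mk g) = QuotientGroup.mk g := rfl

lemma uHom_botOrbit (hX : (botOrbit F hF).H = ⊥) :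
    uHom (hF := hF) (botOrbit F hF) hX = 𝟙 (botOrbit F hF) := by
  apply OrbitCat.hom_ext
  funext t
  obtain ⟨x, rfl⟩ := QuotientGroup.mk_surjective t
  rfl

lemma hom_to_bot_apply {Y : OrbitCat G F} (v : Y ⟶ botOrbit F hF) (γ : G) :
    v.1 (QuotientGroup.mk γ) = QuotientGroup.mk (γ * botG hF (v.1 (QuotientGroup.mk 1))) := by
  have h1 : (QuotientGroup.mk γ : G ⧸ Y.H) = γ • QuotientGroup.mk 1 := by
    rw [MulAction.Quotient.smul_mk, smul_eq_mul, mul_one]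
  rw [h1, v.2]
  conv_lhs => rw [← mk_botG (v.1 (QuotientGroup.mk 1))]
  rw [MulAction.Quotient.smul_mk, smul_eq_mul]

/-- Any two morphisms to `G/1` differ by an `eHom`. -/
lemma hom_to_bot_factor {Y : OrbitCat G F} (v w : Y ⟶ botOrbit F hF) :
    w = v ≫ eHom hF ((botG hF (v.1 (QuotientGroup.mk 1)))⁻¹ * botG hF (w.1 (QuotientGroup.mk 1))) := by
  apply OrbitCat.hom_ext
  funext t
  obtain ⟨γ, rfl⟩ := QuotientGroup.mk_surjective t
  show w.1 (QuotientGroup.mk γ) = (eHom hF _).1 (v.1 (QuotientGroup.mk γ))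
  rw [hom_to_bot_apply w γ, hom_to_bot_apply v γ, eHom_apply]
  congr 1
  group

end OrbitAux
/-! ### The extension-by-zero functor `Rep R G ⥤ OrbitModule R G F` -/

section Phi

variable {R : Type} [CommRing R] {G : Type} [Group G] {F : Set (Subgroup G)}

/-- The submodule of functions `G/H → M` which are equivariant and vanish unless `H = ⊥`. -/
noncomputable def phiSubmodule (M : Rep R G) (X : OrbitCat G F) :
    Submodule R (G ⧸ X.H → M.V) where
  carrier := {c | (∀ (g : G) (t), c (g • t) = M.ρ g (c t)) ∧ (X.H ≠ ⊥ → c = 0)}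
  add_mem' := fun hc hd => ⟨fun g t => by
      simp only [Pi.add_apply, hc.1 g t, hd.1 g t, map_add]; exact congrArg₂ (· + ·) (hc.1 g t) (hd.1 g t), fun h => by
      rw [hc.2 h, hd.2 h, add_zero]⟩
  zero_mem' := ⟨fun g t => by simp, fun _ => rfl⟩
  smul_mem' := fun r c hc => ⟨fun g t => by
      simp only [Pi.smul_apply, hc.1 g t, map_smul]; exact congrArg (r • ·) (hc.1 g t), fun h => by
      rw [hc.2 h, smul_zero]⟩

lemma phiSubmodule_apply_eq {M : Rep R G} {X : OrbitCat G F}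
    (c : phiSubmodule M X) (t : G ⧸ X.H) (γ : G) (ht : t = QuotientGroup.mk γ) :
    c.1 t = M.ρ γ (c.1 (QuotientGroup.mk 1)) := by
  have h1 : t = γ • QuotientGroup.mk 1 := by
    rw [ht, MulAction.Quotient.smul_mk, smul_eq_mul, mul_one]
  rw [h1, c.2.1]

/-- The value of the extension-by-zero of `M` on the orbit category. -/
noncomputable def phiObj (M : Rep R G) : OrbitModule R G F where
  obj X := ModuleCat.of R (phiSubmodule M X.unop)
  map {X Y} u := ModuleCat.ofHom
    { toFun := fun c => ⟨fun t => c.1 (u.unop.1 t),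
        fun g t => by
          show c.1 (u.unop.1 (g • t)) = M.ρ g (c.1 (u.unop.1 t))
          rw [u.unop.2 g t, c.2.1],
        fun hY => by
          by_cases hX : X.unop.H = ⊥
          · exact absurd (OrbitCat.hom_bot u.unop hX) hY
          · have h0 := c.2.2 hX
            funext t
            rw [show c.1 = 0 from h0]
            rfl⟩
      map_add' := fun c d => rfl
      map_smul' := fun r c => rfl }
  map_id X := rfl
  map_comp f g := rfl

/-- Extension by zero as a functor `Rep R G ⥤ OrbitModule R G F`. -/
noncomputable def phiFunctor (R : Type) [CommRing R] (G : Type) [Group G]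
    (F : Set (Subgroup G)) : Rep R G ⥤ OrbitModule R G F where
  obj M := phiObj M
  map {M M'} β :=
    { app := fun X => ModuleCat.ofHom
        { toFun := fun c => ⟨fun t => β.hom (c.1 t),
            fun g t => by
            show β.hom (c.1 (g • t)) = M'.ρ g (β.hom (c.1 t))
            rw [c.2.1 g t, Rep.hom_comm_apply],
            fun hX => by
              have h0 := c.2.2 hX
              funext t
              rw [show c.1 = 0 from h0]
              exact map_zero β.hom⟩
          map_add' := fun c d => Subtype.ext (by funext t; exact map_add β.hom _ _)
          map_smul' := fun r c => Subtype.ext (by funext t; exact map_smul β.hom r _) }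
      naturality := fun X Y u => rfl }
  map_id M := by
    apply NatTrans.ext
    funext X
    apply ModuleCat.hom_ext
    apply LinearMap.ext
    intro c
    rfl
  map_comp β β' := by
    apply NatTrans.ext
    funext X
    apply ModuleCat.hom_ext
    apply LinearMap.ext
    intro c
    rfl

instance : (phiFunctor R G F).Additive where
  map_add := by
    intro M M' β β'
    apply NatTrans.ext
    funext X
    apply ModuleCat.hom_ext
    apply LinearMap.ext
    intro c
    apply Subtype.ext
    funext t
    show (β + β').hom (c.1 t) = β.hom (c.1 t) + β'.hom (c.1 t)
    rw [Rep.add_hom]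
    rfl

end Phi
/-! ### Evaluation at `G/1` as a functor to `Rep R G`, and the hom transposition -/

section Ev

variable {R : Type} [CommRing R] {G : Type} [Group G] {F : Set (Subgroup G)}
variable (hF : (⊥ : Subgroup G) ∈ F)

/-- The value of an `RΓ`-module at `G/1`, as a representation of `G`. -/
noncomputable def evObj (N : OrbitModule R G F) : Rep R G :=
  Rep.of (X := N.obj (op (botOrbit F hF)))
    { toFun := fun g => (N.map ((eHom hF g).op)).hom
      map_one' := by
        show (N.map ((eHom hF (1 : G)).op)).hom = LinearMap.id
        rw [eHom_one, op_id, N.map_id]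
        rfl
      map_mul' := fun a b => by
        show (N.map ((eHom hF (a * b)).op)).hom = _
        rw [← eHom_comp a b, op_comp, Functor.map_comp]
        rfl }

lemma evObj_ρ (N : OrbitModule R G F) (g : G) :
    (evObj hF N).ρ g = (N.map ((eHom hF g).op)).hom := rfl

/-- Evaluation at `G/1` as a functor `OrbitModule R G F ⥤ Rep R G`. -/
noncomputable abbrev evFunctor : OrbitModule R G F ⥤ Rep R G where
  obj N := evObj hF N
  map {N N'} α :=
    ConcreteCategory.ofHom (C := Rep R G)
      { toLinearMap := (α.app (op (botOrbit F hF))).hom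
        isIntertwining' := fun g => congrArg ModuleCat.Hom.hom (α.naturality ((eHom hF g).op)) }
  map_id N := rfl
  map_comp α β := rfl

/-- The canonical equivariant function attached to `m : M`. -/
noncomputable def cElt (M : Rep R G) (m : M.V) :
    phiSubmodule (F := F) M (botOrbit F hF) :=
  ⟨fun t => M.ρ (botG hF t) m,
   fun g t => by
     show M.ρ (botG hF (g • t)) m = M.ρ g (M.ρ (botG hF t) m)
     rw [botG_smul, map_mul]
     rfl,
   fun h => absurd rfl h⟩

@[simp] lemma cElt_apply (M : Rep R G) (m : M.V) (t : G ⧸ (botOrbit F hF).H) :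
    (cElt hF M m).1 t = M.ρ (botG hF t) m := rfl

/-- Transpose of a morphism `Φ M ⟶ N` to a morphism `M ⟶ ev N`. -/
noncomputable def toRep {M : Rep R G} {N : OrbitModule R G F}
    (α : (phiFunctor R G F).obj M ⟶ N) : M ⟶ evObj hF N :=
  ConcreteCategory.ofHom (C := Rep R G)
    { toFun := fun m => α.app (op (botOrbit F hF)) (cElt hF M m)
      map_add' := fun m m' => by
        show α.app (op (botOrbit F hF)) (cElt hF M (m + m'))
          = α.app (op (botOrbit F hF)) (cElt hF M m) + α.app (op (botOrbit F hF)) (cElt hF M m')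
        rw [show cElt hF M (m + m') = cElt hF M m + cElt hF M m' from
          Subtype.ext (by funext t; exact map_add _ _ _)]; exact map_add (α.app (op (botOrbit F hF))).hom _ _
      map_smul' := fun r m => by
        show α.app (op (botOrbit F hF)) (cElt hF M (r • m))
          = r • α.app (op (botOrbit F hF)) (cElt hF M m)
        rw [show cElt hF M (r • m) = r • cElt hF M m from
          Subtype.ext (by funext t; exact map_smul _ _ _)]; exact map_smul (α.app (op (botOrbit F hF))).hom _ _
      isIntertwining' := fun g => by
        apply LinearMap.ext
        intro m
        show α.app (op (botOrbit F hF)) (cElt hF M (M.ρ g m))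
          = (evObj hF N).ρ g (α.app (op (botOrbit F hF)) (cElt hF M m))
        have h1 : cElt hF M (M.ρ g m)
            = ((phiFunctor R G F).obj M).map ((eHom hF g).op) (cElt hF M m) := by
          apply Subtype.ext
          funext t
          show M.ρ (botG hF t) (M.ρ g m) = (cElt hF M m).1 ((eHom hF g).1 t)
          obtain ⟨x, rfl⟩ := QuotientGroup.mk_surjective t
          rw [eHom_apply, cElt_apply, botG_mk, botG_mk, map_mul]
          rfl
        rw [h1, evObj_ρ]
        exact LinearMap.congr_fun (congrArg ModuleCat.Hom.hom (α.naturality ((eHom hF g).op))) (cElt hF M m) }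
  
/-- Evaluation of an equivariant function at the identity coset. -/
noncomputable def evAtOne (M : Rep R G) (X : OrbitCat G F) :
    phiSubmodule M X →ₗ[R] M.V where
  toFun c := c.1 (QuotientGroup.mk 1)
  map_add' c d := rfl
  map_smul' r c := rfl

open scoped Classical in
/-- Transpose of a morphism `M ⟶ ev N` to a morphism `Φ M ⟶ N`. -/
noncomputable def ofRep {M : Rep R G} {N : OrbitModule R G F}
    (φ : M ⟶ evObj hF N) : (phiFunctor R G F).obj M ⟶ N where
  app X :=
    if hX : X.unop.H = ⊥ then
      ModuleCat.ofHom (((N.map (uHom (hF := hF) X.unop hX).op).hom.comp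
        φ.hom.toLinearMap).comp (evAtOne M X.unop))
    else 0
  naturality {X Y} u := by
    apply ModuleCat.hom_ext
    apply LinearMap.ext
    intro c
    show (if hY : Y.unop.H = ⊥ then
        ModuleCat.ofHom (((N.map (uHom (hF := hF) Y.unop hY).op).hom.comp
          φ.hom.toLinearMap).comp (evAtOne M Y.unop))
      else 0) (((phiFunctor R G F).obj M).map u c)
      = N.map u ((if hX : X.unop.H = ⊥ then
        ModuleCat.ofHom (((N.map (uHom (hF := hF) X.unop hX).op).hom.comp
          φ.hom.toLinearMap).comp (evAtOne M X.unop))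
      else 0) c)
    by_cases hX : X.unop.H = ⊥
    · have hY : Y.unop.H = ⊥ := OrbitCat.hom_bot u.unop hX
      rw [dif_pos hX, dif_pos hY]
      show N.map (uHom (hF := hF) Y.unop hY).op (φ.hom (c.1 (u.unop.1 (QuotientGroup.mk 1))))
        = N.map u (N.map (uHom (hF := hF) X.unop hX).op (φ.hom (c.1 (QuotientGroup.mk 1))))
      obtain ⟨γ, hγ⟩ := QuotientGroup.mk_surjective (u.unop.1 (QuotientGroup.mk 1))
      set v := uHom (hF := hF) Y.unop hY with hv
      set w := u.unop ≫ uHom (hF := hF) X.unop hX with hw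
      have hRW : N.map u (N.map (uHom (hF := hF) X.unop hX).op
            (φ.hom (c.1 (QuotientGroup.mk 1))))
          = N.map w.op (φ.hom (c.1 (QuotientGroup.mk 1))) := by
        rw [hw, op_comp, Functor.map_comp]
        rfl
      rw [hRW]
      have hfact := hom_to_bot_factor v w
      have hδv : botG hF (v.1 (QuotientGroup.mk 1)) = 1 := by
        rw [hv, uHom_mk]
        exact botG_mk 1
      have hδw : botG hF (w.1 (QuotientGroup.mk 1)) = γ := by
        rw [hw]
        show botG hF ((uHom (hF := hF) X.unop hX).1 (u.unop.1 (QuotientGroup.mk 1))) = γ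
        rw [← hγ, uHom_mk, botG_mk]
      rw [hδv, hδw, inv_one, one_mul] at hfact
      rw [hfact, op_comp, Functor.map_comp]
      show N.map v.op (φ.hom (c.1 (u.unop.1 (QuotientGroup.mk 1))))
        = N.map v.op (N.map (eHom hF γ).op (φ.hom (c.1 (QuotientGroup.mk 1))))
      rw [show N.map ((eHom hF γ).op) (φ.hom (c.1 (QuotientGroup.mk 1)))
            = φ.hom (M.ρ γ (c.1 (QuotientGroup.mk 1))) from
        (Rep.hom_comm_apply φ γ (c.1 (QuotientGroup.mk 1))).symm]
      rw [← phiSubmodule_apply_eq c (u.unop.1 (QuotientGroup.mk 1)) γ hγ.symm]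
    · have hc : c.1 = 0 := c.2.2 hX
      rw [dif_neg hX]
      have hN : N.map u ((0 : ((phiFunctor R G F).obj M).obj X ⟶ N.obj X) c) = 0 :=
        map_zero (N.map u).hom
      refine Eq.trans ?_ hN.symm
      by_cases hY : Y.unop.H = ⊥
      · rw [dif_pos hY]
        show N.map (uHom (hF := hF) Y.unop hY).op (φ.hom (c.1 (u.unop.1 (QuotientGroup.mk 1)))) = 0
        have h0 : c.1 (u.unop.1 (QuotientGroup.mk 1)) = 0 := by rw [hc]; rfl
        rw [h0, map_zero]; exact map_zero (N.map (uHom (hF := hF) Y.unop hY).op).hom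
      · rw [dif_neg hY]
        rfl

open scoped Classical in
lemma ofRep_app_pos {M : Rep R G} {N : OrbitModule R G F} (φ : M ⟶ evObj hF N)
    (X : (OrbitCat G F)ᵒᵖ) (hX : X.unop.H = ⊥) (c : phiSubmodule M X.unop) :
    (ofRep hF φ).app X c
      = N.map (uHom (hF := hF) X.unop hX).op (φ.hom (c.1 (QuotientGroup.mk 1))) := by
  show (if hX' : X.unop.H = ⊥ then
      ModuleCat.ofHom (((N.map (uHom (hF := hF) X.unop hX').op).hom.comp
        φ.hom.toLinearMap).comp (evAtOne M X.unop))
    else 0) c = _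
  rw [dif_pos hX]
  rfl

open scoped Classical in
lemma ofRep_app_neg {M : Rep R G} {N : OrbitModule R G F} (φ : M ⟶ evObj hF N)
    (X : (OrbitCat G F)ᵒᵖ) (hX : ¬ X.unop.H = ⊥) (c : phiSubmodule M X.unop) :
    (ofRep hF φ).app X c = 0 := by
  show (if hX' : X.unop.H = ⊥ then
      ModuleCat.ofHom (((N.map (uHom (hF := hF) X.unop hX').op).hom.comp
        φ.hom.toLinearMap).comp (evAtOne M X.unop))
    else 0) c = _
  rw [dif_neg hX]
  rfl

end Ev
/-! ### The transposition is a natural linear equivalence; projectivity -/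

section Transpose

variable {R : Type} [CommRing R] {G : Type} [Group G] {F : Set (Subgroup G)}
variable (hF : (⊥ : Subgroup G) ∈ F)

lemma ofRep_toRep {M : Rep R G} {N : OrbitModule R G F}
    (α : (phiFunctor R G F).obj M ⟶ N) : ofRep hF (toRep hF α) = α := by
  apply NatTrans.ext
  funext X
  apply ModuleCat.hom_ext
  apply LinearMap.ext
  intro c
  show (ofRep hF (toRep hF α)).app X c = α.app X c
  by_cases hX : X.unop.H = ⊥
  · rw [ofRep_app_pos hF (toRep hF α) X hX c]
    show N.map (uHom (hF := hF) X.unop hX).op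
        (α.app (op (botOrbit F hF)) (cElt hF M (c.1 (QuotientGroup.mk 1)))) = α.app X c
    have hnat := LinearMap.congr_fun (congrArg ModuleCat.Hom.hom (α.naturality ((uHom (hF := hF) X.unop hX).op)))
      (cElt hF M (c.1 (QuotientGroup.mk 1)))
    have hc : ((phiFunctor R G F).obj M).map ((uHom (hF := hF) X.unop hX).op)
        (cElt hF M (c.1 (QuotientGroup.mk 1))) = c := by
      apply Subtype.ext
      funext t
      obtain ⟨γ, rfl⟩ := QuotientGroup.mk_surjective t
      show (cElt hF M (c.1 (QuotientGroup.mk 1))).1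
          ((uHom (hF := hF) X.unop hX).1 (QuotientGroup.mk γ)) = c.1 (QuotientGroup.mk γ)
      rw [uHom_mk, cElt_apply, botG_mk]
      exact (phiSubmodule_apply_eq c (QuotientGroup.mk γ) γ rfl).symm
    exact (hnat.symm.trans (congrArg (α.app X) hc))
  · rw [ofRep_app_neg hF (toRep hF α) X hX c]
    have hc : c = 0 := Subtype.ext (c.2.2 hX)
    rw [hc]
    exact (map_zero (α.app X).hom).symm

lemma toRep_ofRep {M : Rep R G} {N : OrbitModule R G F}
    (φ : M ⟶ evObj hF N) : toRep hF (ofRep hF φ) = φ := by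
  apply Rep.hom_ext; apply Representation.IntertwiningMap.ext
  apply LinearMap.ext
  intro m
  show (ofRep hF φ).app (op (botOrbit F hF)) (cElt hF M m) = φ.hom m
  rw [ofRep_app_pos hF φ (op (botOrbit F hF)) rfl]
  rw [show (cElt hF M m).1 (QuotientGroup.mk 1) = m by
    rw [cElt_apply, botG_mk, map_one]; rfl]
  exact (congrArg (fun f => (N.map f.op).hom (φ.hom m)) (uHom_botOrbit (hF := hF) rfl)).trans
    (by rw [op_id, N.map_id])

lemma ofRep_comp {M : Rep R G} {N N' : OrbitModule R G F}
    (φ : M ⟶ evObj hF N) (p : N ⟶ N') :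
    ofRep hF φ ≫ p = ofRep hF (φ ≫ (evFunctor hF).map p) := by
  apply NatTrans.ext
  funext X
  apply ModuleCat.hom_ext
  apply LinearMap.ext
  intro c
  show p.app X ((ofRep hF φ).app X c) = (ofRep hF (φ ≫ (evFunctor hF).map p)).app X c
  by_cases hX : X.unop.H = ⊥
  · rw [ofRep_app_pos hF φ X hX c, ofRep_app_pos hF (φ ≫ (evFunctor hF).map p) X hX c]
    show p.app X (N.map (uHom (hF := hF) X.unop hX).op (φ.hom (c.1 (QuotientGroup.mk 1))))
      = N'.map (uHom (hF := hF) X.unop hX).op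
          (p.app (op (botOrbit F hF)) (φ.hom (c.1 (QuotientGroup.mk 1))))
    exact LinearMap.congr_fun (congrArg ModuleCat.Hom.hom (p.naturality ((uHom (hF := hF) X.unop hX).op)))
      (φ.hom (c.1 (QuotientGroup.mk 1)))
  · rw [ofRep_app_neg hF φ X hX c, ofRep_app_neg hF (φ ≫ (evFunctor hF).map p) X hX c]
    exact map_zero (p.app X).hom

lemma toRep_comp_left {M M' : Rep R G} {N : OrbitModule R G F}
    (β : M' ⟶ M) (α : (phiFunctor R G F).obj M ⟶ N) :
    toRep hF ((phiFunctor R G F).map β ≫ α) = β ≫ toRep hF α := by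
  apply Rep.hom_ext; apply Representation.IntertwiningMap.ext
  apply LinearMap.ext
  intro m
  show α.app (op (botOrbit F hF))
      (((phiFunctor R G F).map β).app (op (botOrbit F hF)) (cElt hF M' m))
    = α.app (op (botOrbit F hF)) (cElt hF M (β.hom m))
  congr 1
  apply Subtype.ext
  funext t
  show β.hom ((cElt hF M' m).1 t) = M.ρ (botG hF t) (β.hom m)
  rw [cElt_apply]
  exact Rep.hom_comm_apply β (botG hF t) m

/-- The transposition, as a linear equivalence of hom-modules. -/
noncomputable def homLEquiv (M : Rep R G) (N : OrbitModule R G F) :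
    ((phiFunctor R G F).obj M ⟶ N) ≃ₗ[R] (M ⟶ evObj hF N) where
  toFun := toRep hF
  invFun := ofRep hF
  left_inv := ofRep_toRep hF
  right_inv := toRep_ofRep hF
  map_add' α α' := by
    apply Rep.hom_ext; apply Representation.IntertwiningMap.ext
    apply LinearMap.ext
    intro m
    show (α + α').app (op (botOrbit F hF)) (cElt hF M m) = ((toRep hF α) + (toRep hF α')).hom m
    rw [NatTrans.app_add, Rep.add_hom]
    rfl
  map_smul' r α := by
    apply Rep.hom_ext; apply Representation.IntertwiningMap.ext
    apply LinearMap.ext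
    intro m
    show (r • α).app (op (botOrbit F hF)) (cElt hF M m) = (r • (toRep hF α)).hom m
    rw [NatTrans.app_smul, Rep.smul_hom]
    rfl

include hF in
lemma phi_projective (M : Rep R G) [Projective M] :
    Projective ((phiFunctor R G F).obj M) where
  factors {E X'} f e he := by
    have hepi : Epi ((evFunctor hF).map e) := by
      have h1 : Epi (e.app (op (botOrbit F hF))) := inferInstance
      have h2 : Epi ((forget₂ (Rep R G) (ModuleCat R)).map ((evFunctor hF).map e)) := h1
      exact (forget₂ (Rep R G) (ModuleCat R)).epi_of_epi_map h2
    obtain ⟨ψ, hψ⟩ := Projective.factors (toRep hF f) ((evFunctor hF).map e)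
    refine ⟨ofRep hF ψ, ?_⟩
    rw [ofRep_comp, hψ, ofRep_toRep]

end Transpose
/-! ### Exactness properties of the extension-by-zero functor -/

section PhiExact

open CategoryTheory.Limits

variable {R : Type} [CommRing R] {G : Type} [Group G] {F : Set (Subgroup G)}
variable (hF : (⊥ : Subgroup G) ∈ F)

/-- The value of `Φ M` at `G/1` is `M` itself. -/
noncomputable def phiBotLEquiv (M : Rep R G) :
    phiSubmodule (F := F) M (botOrbit F hF) ≃ₗ[R] M.V where
  toFun c := c.1 (QuotientGroup.mk 1)
  invFun m := cElt hF M m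
  left_inv c := by
    apply Subtype.ext
    funext t
    obtain ⟨γ, rfl⟩ := QuotientGroup.mk_surjective t
    rw [cElt_apply, botG_mk]
    exact (phiSubmodule_apply_eq c (QuotientGroup.mk γ) γ rfl).symm
  right_inv m := by
    show (cElt hF M m).1 (QuotientGroup.mk 1) = m
    rw [cElt_apply, botG_mk, map_one]
    rfl
  map_add' c d := rfl
  map_smul' r c := rfl

/-- Evaluating `Φ` at `G/1` gives the forgetful functor. -/
noncomputable def phiEvalBotIso :
    phiFunctor R G F ⋙ (evaluation (OrbitCat G F)ᵒᵖ (ModuleCat R)).obj (op (botOrbit F hF))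
      ≅ forget₂ (Rep R G) (ModuleCat R) :=
  NatIso.ofComponents (fun M => (phiBotLEquiv hF M).toModuleIso)
    (fun {M M'} β => by
      apply ModuleCat.hom_ext
      apply LinearMap.ext
      intro c
      rfl)

lemma phi_obj_isZero (M : Rep R G) (X : (OrbitCat G F)ᵒᵖ) (hX : ¬ X.unop.H = ⊥) :
    IsZero (((phiFunctor R G F).obj M).obj X) := by
  haveI : Subsingleton (↑(((phiFunctor R G F).obj M).obj X)) :=
    ⟨fun (a b : phiSubmodule M X.unop) => Subtype.ext (by rw [a.2.2 hX, b.2.2 hX])⟩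
  exact ModuleCat.isZero_of_subsingleton _

lemma phi_eval_isZero (X : (OrbitCat G F)ᵒᵖ) (hX : ¬ X.unop.H = ⊥) :
    IsZero (phiFunctor R G F ⋙ (evaluation (OrbitCat G F)ᵒᵖ (ModuleCat R)).obj X) := by
  rw [Functor.isZero_iff]
  intro M
  exact phi_obj_isZero M X hX

include hF in
lemma phi_preservesFiniteLimits : PreservesFiniteLimits (phiFunctor R G F) := by
  apply preservesFiniteLimits_of_evaluation
  intro X
  by_cases hX : X.unop.H = ⊥
  · have hXeq : X = op (botOrbit F hF) := by
      rw [← OrbitCat.eq_botOrbit (hF := hF) X.unop hX, Opposite.op_unop]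
    rw [hXeq]
    exact preservesFiniteLimits_of_natIso (phiEvalBotIso hF).symm
  · exact ⟨fun J _ _ => Functor.preservesLimitsOfShape_of_isZero _ (phi_eval_isZero X hX) J⟩

include hF in
lemma phi_preservesFiniteColimits : PreservesFiniteColimits (phiFunctor R G F) := by
  apply preservesFiniteColimits_of_evaluation
  intro X
  by_cases hX : X.unop.H = ⊥
  · have hXeq : X = op (botOrbit F hF) := by
      rw [← OrbitCat.eq_botOrbit (hF := hF) X.unop hX, Opposite.op_unop]
    rw [hXeq]
    exact preservesFiniteColimits_of_natIso (phiEvalBotIso hF).symm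
  · exact ⟨fun J _ _ => Functor.preservesColimitsOfShape_of_isZero _ (phi_eval_isZero X hX) J⟩

open scoped Classical in
/-- `Φ` applied to the trivial representation is the module `R_0`. -/
noncomputable def phiTrivIso
    (hS : ∀ {X Y : (OrbitCat G F)ᵒᵖ}, (X ⟶ Y) → X.unop.H ∈ ({⊥} : Set (Subgroup G))
       → Y.unop.H ∈ ({⊥} : Set (Subgroup G))) :
    (phiFunctor R G F).obj (Rep.trivial R G R) ≅ suppMod R ({⊥} : Set (Subgroup G)) hS :=
  NatIso.ofComponents
    (fun X => LinearEquiv.toModuleIso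
      { toFun := fun c (_ : PLift (X.unop.H ∈ ({⊥} : Set (Subgroup G)))) =>
          c.1 (QuotientGroup.mk 1)
        invFun := fun v => ⟨fun _ => if h : X.unop.H ∈ ({⊥} : Set (Subgroup G)) then v ⟨h⟩ else 0,
          fun g t => rfl,
          fun hX => by
            funext t
            rw [dif_neg (by simpa using hX)]
            rfl⟩
        left_inv := fun c => by
          apply Subtype.ext
          funext t
          by_cases hX : X.unop.H = ⊥
          · show (if h : X.unop.H ∈ ({⊥} : Set (Subgroup G)) then c.1 (QuotientGroup.mk 1) else 0)
              = c.1 t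
            rw [dif_pos (by simpa using hX)]
            obtain ⟨γ, rfl⟩ := QuotientGroup.mk_surjective t
            exact (phiSubmodule_apply_eq c (QuotientGroup.mk γ) γ rfl).symm
          · show (if h : X.unop.H ∈ ({⊥} : Set (Subgroup G)) then c.1 (QuotientGroup.mk 1) else 0)
              = c.1 t
            rw [dif_neg (by simpa using hX), c.2.2 hX]
            rfl
        right_inv := fun v => by
          funext hp
          show (if h : X.unop.H ∈ ({⊥} : Set (Subgroup G)) then v ⟨h⟩ else 0) = v hp
          rw [dif_pos hp.down]
        map_add' := fun c d => rfl
        map_smul' := fun r c => rfl })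
    (fun {X Y} u => by
      apply ModuleCat.hom_ext
      apply LinearMap.ext
      intro c
      funext hy
      show c.1 (u.unop.1 (QuotientGroup.mk 1))
        = (if hx : X.unop.H ∈ ({⊥} : Set (Subgroup G)) then c.1 (QuotientGroup.mk 1) else 0)
      by_cases hX : X.unop.H = ⊥
      · rw [dif_pos (by simpa using hX)]
        obtain ⟨γ, hγ⟩ := QuotientGroup.mk_surjective (u.unop.1 (QuotientGroup.mk 1))
        rw [phiSubmodule_apply_eq c (u.unop.1 (QuotientGroup.mk 1)) γ hγ.symm]
        rfl
      · rw [dif_neg (by simpa using hX)]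
        have h0 : c.1 = 0 := c.2.2 hX
        rw [h0]
        rfl)

end PhiExact
/-! ### Transport of projective resolutions along `Φ`, and hom-complex comparisons -/

section Resolutions

open CategoryTheory.Limits

variable {R : Type} [CommRing R] {G : Type} [Group G] {F : Set (Subgroup G)}
variable (hF : (⊥ : Subgroup G) ∈ F)

lemma evObj_constMod : evObj hF (constMod R G F) = Rep.trivial R G R := rfl

/-- The image under `Φ` of a projective resolution of the trivial representation is a
projective resolution of `R_0`. -/
noncomputable def phiResolution
    (hS : ∀ {X Y : (OrbitCat G F)ᵒᵖ}, (X ⟶ Y) → X.unop.H ∈ ({⊥} : Set (Subgroup G))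
       → Y.unop.H ∈ ({⊥} : Set (Subgroup G)))
    (S : ProjectiveResolution (Rep.trivial R G R)) :
    ProjectiveResolution (suppMod R ({⊥} : Set (Subgroup G)) hS) where
  complex := ((phiFunctor R G F).mapHomologicalComplex (ComplexShape.down ℕ)).obj S.complex
  projective n := by
    haveI := S.projective n
    exact phi_projective hF (S.complex.X n)
  π := ((phiFunctor R G F).mapHomologicalComplex (ComplexShape.down ℕ)).map S.π ≫
    (HomologicalComplex.singleMapHomologicalComplex (phiFunctor R G F) (ComplexShape.down ℕ) 0).hom.app
      (Rep.trivial R G R) ≫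
    (ChainComplex.single₀ (OrbitModule R G F)).map (phiTrivIso (R := R) (G := G) (F := F) hS).hom
  quasiIso := by
    haveI := phi_preservesFiniteLimits (R := R) hF
    haveI := phi_preservesFiniteColimits (R := R) hF
    haveI := S.quasiIso
    infer_instance

/-- `homCochain` agrees with mathlib's `linearYonedaObj`. -/
noncomputable def homCochainLYIso {C : Type uC} [CategoryTheory.Category.{vC} C]
    [Abelian C] [CategoryTheory.Linear R C] (K : ChainComplex C ℕ) (N : C) :
    homCochain R K N ≅ K.linearYonedaObj R N :=
  HomologicalComplex.Hom.isoOfComponents (fun i => Iso.refl _)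
    (fun i j hij => by
      obtain rfl : i + 1 = j := hij
      simp only [Iso.refl_hom, Category.id_comp, Category.comp_id]
      rw [show (homCochain R K N).d i (i + 1)
          = ((CategoryTheory.linearYoneda R C).obj N).map (K.d (i + 1) i).op from
        homCochain_d_succ R _ _ i]
      rfl)

/-- The hom-complex of the transported resolution computes the hom-complex over `Rep R G`. -/
noncomputable def homCochainPhiIso (K : ChainComplex (Rep R G) ℕ) :
    homCochain R (((phiFunctor R G F).mapHomologicalComplex (ComplexShape.down ℕ)).obj K)
        (constMod R G F)
      ≅ homCochain R K (Rep.trivial R G R) :=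
  HomologicalComplex.Hom.isoOfComponents
    (fun n => LinearEquiv.toModuleIso (homLEquiv hF (K.X n) (constMod R G F)))
    (fun i j hij => by
      obtain rfl : i + 1 = j := hij
      rw [show (homCochain R K (Rep.trivial R G R)).d i (i + 1)
          = ((CategoryTheory.linearYoneda R (Rep R G)).obj (Rep.trivial R G R)).map
              (K.d (i + 1) i).op from homCochain_d_succ R _ _ i]
      rw [show (homCochain R (((phiFunctor R G F).mapHomologicalComplex
              (ComplexShape.down ℕ)).obj K) (constMod R G F)).d i (i + 1)
          = ((CategoryTheory.linearYoneda R (OrbitModule R G F)).obj (constMod R G F)).map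
              ((((phiFunctor R G F).mapHomologicalComplex
                (ComplexShape.down ℕ)).obj K).d (i + 1) i).op from homCochain_d_succ R _ _ i]
      apply ModuleCat.hom_ext
      apply LinearMap.ext
      intro α
      show K.d (i + 1) i ≫ toRep hF α
        = toRep hF ((phiFunctor R G F).map (K.d (i + 1) i) ≫ α)
      exact (toRep_comp_left hF (K.d (i + 1) i) α).symm)

end Resolutions
/-- Let `G = Z/2 × Z/2`, `F = {1, H_1, H_2, H_3}` the family of
proper subgroups, `R = F_2`, `Γ = Or_F(G)`, and `R_0` the `RΓ`-module with value `R` at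
`G/1` and `0` at each `G/H_i`.  Then for every `n ≥ 0`, `Ext^n_{RΓ}(R_0, R̲)` —
computed as the `n`-th cohomology of `Hom_{RΓ}(P_*, R̲)` for any projective resolution
`P_*` of `R_0` — is isomorphic to the ordinary group cohomology `H^n(G, R)` with
coefficients in the trivial module `R`. -/
theorem ext_r0_iso_groupCohomology
    (n : ℕ) (P : ProjectiveResolution r0Mod) :
    Nonempty ((homCochain (ZMod 2) P.complex (constMod (ZMod 2) K4 k4F)).homology n
      ≅ groupCohomology (Rep.trivial (ZMod 2) K4 (ZMod 2)) n) := by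
  classical
  have hF : (⊥ : Subgroup K4) ∈ k4F := by
    intro h
    have h1 : k4a ∈ (⊤ : Subgroup K4) := Subgroup.mem_top _
    rw [← h, Subgroup.mem_bot] at h1
    exact (by decide : k4a ≠ 1) h1
  obtain ⟨S⟩ := HasProjectiveResolution.out (Z := Rep.trivial (ZMod 2) K4 (ZMod 2))
  let Q : ProjectiveResolution r0Mod := phiResolution hF k4_hS_bot S
  let e : HomotopyEquiv P.complex Q.complex := ProjectiveResolution.homotopyEquiv P Q
  let L := ((linearYoneda (ZMod 2) (OrbitModule (ZMod 2) K4 k4F)).obj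
    (constMod (ZMod 2) K4 k4F)).rightOp
  let he : HomotopyEquiv ((L.mapHomologicalComplex (ComplexShape.down ℕ)).obj P.complex)
      ((L.mapHomologicalComplex (ComplexShape.down ℕ)).obj Q.complex) :=
    L.mapHomotopyEquiv e
  refine ⟨?_⟩
  refine (HomologicalComplex.homologyFunctor (ModuleCat (ZMod 2)) (ComplexShape.up ℕ) n).mapIso
    (homCochainLYIso P.complex (constMod (ZMod 2) K4 k4F)) ≪≫ ?_
  refine HomologicalComplex.homologyUnop
    ((L.mapHomologicalComplex (ComplexShape.down ℕ)).obj P.complex) n ≪≫ ?_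
  refine (he.toHomologyIso n).unop.symm ≪≫ ?_
  refine (HomologicalComplex.homologyUnop
    ((L.mapHomologicalComplex (ComplexShape.down ℕ)).obj Q.complex) n).symm ≪≫ ?_
  refine ((HomologicalComplex.homologyFunctor (ModuleCat (ZMod 2)) (ComplexShape.up ℕ) n).mapIso
    (homCochainLYIso Q.complex (constMod (ZMod 2) K4 k4F))).symm ≪≫ ?_
  refine (HomologicalComplex.homologyFunctor (ModuleCat (ZMod 2)) (ComplexShape.up ℕ) n).mapIso
    (homCochainPhiIso hF S.complex) ≪≫ ?_
  refine (HomologicalComplex.homologyFunctor (ModuleCat (ZMod 2)) (ComplexShape.up ℕ) n).mapIso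
    (homCochainLYIso S.complex (Rep.trivial (ZMod 2) K4 (ZMod 2))) ≪≫ ?_
  exact (S.isoExt n (Rep.trivial (ZMod 2) K4 (ZMod 2))).symm ≪≫
    (groupCohomologyIsoExt (Rep.trivial (ZMod 2) K4 (ZMod 2)) n).symm
end
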